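/- arXiv:2003.05623 — 2 statements merged into one kernel-verified Lean document; each statement's English description precedes it below -/
import Mathlib

section
/- Suppose the evaluation policy satisfies sequential ignorability. Then the value of the evaluation policy admits the representation E[Y(Ā_{1:T})] = Σ_{a_{1:T} ∈ 𝒜_1×⋯×𝒜_T} E[ Y(a_{1:T}) · ∏_{t=1}^T π̄_t(a_t | H̄_t(a_{1:t-1})) ]. -/
open MeasureTheory ProbabilityTheory Filter
open scoped ENNReal

noncomputable section

namespace OPE

variable {Ω 𝒮 : Type} [m : MeasurableSpace Ω] [MeasurableSpace 𝒮]
variable {A : ℕ → Type} [∀ t, Fintype (A t)] [∀ t, Nonempty (A t)]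
  [∀ t, DecidableEq (A t)] [∀ t, MeasurableSpace (A t)]

/-- The discounted return `Y(a_{1:T}) = ∑_{t=1}^T γ^{t-1} R_t(a_{1:t})`
(time is `0`-indexed here, so the discount at time `t` is `γ ^ t`). -/
def ret (R : ℕ → ((s : ℕ) → A s) → Ω → ℝ) (γ : ℝ) (T : ℕ)
    (a : (s : ℕ) → A s) (ω : Ω) : ℝ :=
  ∑ t ∈ Finset.range T, γ ^ t * R t a ω

/-- The (random) action sequence generated by a family of action variables. -/
def seqOf (Aact : (t : ℕ) → Ω → A t) (ω : Ω) : (s : ℕ) → A s := fun s => Aact s ω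

/-- Extension of a finite action sequence `a_{1:T}` to all times (the values beyond
the horizon are irrelevant). -/
def extAct (T : ℕ) (aF : (s : Fin T) → A s.1) : (s : ℕ) → A s := fun s =>
  if h : s < T then aF ⟨s, h⟩ else Classical.arbitrary (A s)

/-- The σ-algebra generated by the potential states `S_1, …, S_t` along the (deterministic)
counterfactual action sequence `a`; this is the information in `H_t(a_{1:t-1})`. -/
def histC (S : ℕ → ((s : ℕ) → A s) → Ω → 𝒮) (t : ℕ) (a : (s : ℕ) → A s) :
    MeasurableSpace Ω :=
  ⨆ s ∈ Finset.range (t + 1), MeasurableSpace.comap (S s a) inferInstance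

/-- The σ-algebra generated by the history `H_t = (S_1, A_1, S_2(A_1), …, A_{t-1},
S_t(A_{1:t-1}))` generated by the action process `Aact`. -/
def hist (S : ℕ → ((s : ℕ) → A s) → Ω → 𝒮) (Aact : (t : ℕ) → Ω → A t) (t : ℕ) :
    MeasurableSpace Ω :=
  (⨆ s ∈ Finset.range (t + 1),
      MeasurableSpace.comap (fun ω => S s (seqOf Aact ω) ω) inferInstance) ⊔
  (⨆ s ∈ Finset.range t, MeasurableSpace.comap (Aact s) inferInstance)

/-- `π_t(b ∣ H_t)`: the conditional probability that the behavior policy takes action `b`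
at time `t` given the observed history. -/
def piObs (P : Measure Ω) (S : ℕ → ((s : ℕ) → A s) → Ω → 𝒮)
    (Aobs : (t : ℕ) → Ω → A t) (t : ℕ) (b : A t) : Ω → ℝ :=
  P[fun ω => if Aobs t ω = b then (1 : ℝ) else 0 | hist S Aobs t]

/-- `π_t(a_t ∣ H_t(a_{1:t-1}))`: the conditional probability of the action `a_t` given the
counterfactual history along `a`. -/
def piC (P : Measure Ω) (S : ℕ → ((s : ℕ) → A s) → Ω → 𝒮)
    (Aobs : (t : ℕ) → Ω → A t) (t : ℕ) (a : (s : ℕ) → A s) : Ω → ℝ :=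
  P[fun ω => if Aobs t ω = a t then (1 : ℝ) else 0 | histC S t a]

/-- Importance sampling ratio `ρ_t = π̄_t(A_t ∣ H̄_t(A_{1:t-1})) / π_t(A_t ∣ H_t)`. -/
def rho (P : Measure Ω) (S : ℕ → ((s : ℕ) → A s) → Ω → 𝒮)
    (Aobs : (t : ℕ) → Ω → A t)
    (πbar : (t : ℕ) → A t → ((s : ℕ) → A s) → Ω → ℝ) (t : ℕ) : Ω → ℝ := fun ω =>
  πbar t (Aobs t ω) (seqOf Aobs ω) ω / piObs P S Aobs t (Aobs t ω) ω

/-- The tuple of potential outcomes relevant to sequential ignorability at time `t`: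
the rewards `R_s(a_{1:s})` for `t ≤ s ≤ T` and states `S_s(a_{1:s-1})` for `t < s ≤ T`,
over all action sequences. -/
def Wfut (S : ℕ → ((s : ℕ) → A s) → Ω → 𝒮) (R : ℕ → ((s : ℕ) → A s) → Ω → ℝ)
    (T : ℕ) (t : ℕ) (ω : Ω) :
    (((s : ℕ) → A s) → {s : ℕ // t ≤ s ∧ s < T} → ℝ) ×
      (((s : ℕ) → A s) → {s : ℕ // t < s ∧ s < T} → 𝒮) :=
  (fun a s => R s.1 a ω, fun a s => S s.1 a ω)

/-- The tuple `W` of all potential states and rewards over all action sequences. -/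
def Wall (S : ℕ → ((s : ℕ) → A s) → Ω → 𝒮) (R : ℕ → ((s : ℕ) → A s) → Ω → ℝ)
    (T : ℕ) (ω : Ω) :
    (((s : ℕ) → A s) → {s : ℕ // s < T} → ℝ) ×
      (((s : ℕ) → A s) → {s : ℕ // s < T} → 𝒮) :=
  (fun a s => R s.1 a ω, fun a s => S s.1 a ω)

/-- Conditional independence of `f` and `g` given the σ-algebra `mH`, expressed through the
factorization of conditional expectations of indicators. -/
def CondIndepGiven (P : Measure Ω) (mH : MeasurableSpace Ω) {β γ : Type*}
    [MeasurableSpace β] [MeasurableSpace γ] (f : Ω → β) (g : Ω → γ) : Prop :=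
  ∀ (u : Set β) (v : Set γ), MeasurableSet u → MeasurableSet v →
    (P[fun ω => (u.indicator (fun _ => (1 : ℝ)) (f ω)) *
        (v.indicator (fun _ => (1 : ℝ)) (g ω)) | mH])
      =ᵐ[P]
    (fun ω => ((P[fun ω' => u.indicator (fun _ => (1 : ℝ)) (f ω') | mH]) ω) *
        ((P[fun ω' => v.indicator (fun _ => (1 : ℝ)) (g ω') | mH]) ω))

/-- Sequential ignorability of the action process `Aact` at time `t`: conditionally on the
history it generates, the action at time `t` is independent of the future potential outcomes. -/
def SeqIgnorableAt (P : Measure Ω) (S : ℕ → ((s : ℕ) → A s) → Ω → 𝒮)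
    (R : ℕ → ((s : ℕ) → A s) → Ω → ℝ) (T : ℕ)
    (Aact : (t : ℕ) → Ω → A t) (t : ℕ) : Prop :=
  CondIndepGiven P (hist S Aact t) (Aact t) (Wfut S R T t)

/-- The evaluation policy actions `Ā_t` are drawn as `Ā_t ∼ π̄_t(⋅ ∣ H̄_t)`. -/
def GeneratedBy (P : Measure Ω) (S : ℕ → ((s : ℕ) → A s) → Ω → 𝒮) (T : ℕ)
    (Abar : (t : ℕ) → Ω → A t)
    (πbar : (t : ℕ) → A t → ((s : ℕ) → A s) → Ω → ℝ) : Prop :=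
  ∀ t < T, ∀ b : A t,
    (P[fun ω => if Abar t ω = b then (1 : ℝ) else 0 | hist S Abar t])
      =ᵐ[P] (fun ω => πbar t b (seqOf Abar ω) ω)

/-- `E[X ∣ H_t(a_{1:t-1}), A_t = a_t]`, the conditional expectation given the counterfactual
history and the event `A_t = a_t`. -/
def condE (P : Measure Ω) (S : ℕ → ((s : ℕ) → A s) → Ω → 𝒮)
    (Aobs : (t : ℕ) → Ω → A t) (t : ℕ) (a : (s : ℕ) → A s) (X : Ω → ℝ) : Ω → ℝ :=
  fun ω =>
    (P[fun ω' => X ω' * (if Aobs t ω' = a t then (1 : ℝ) else 0) | histC S t a]) ω /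
      piC P S Aobs t a ω

/-- Nested conditional expectation: `nestE a t₁ k X = E^{t₁}_{a}[⋯ E^{t₁+k}_{a}[X] ⋯]`,
so `E^{t₁:t₂}_{a_{1:t₂}}[X] = nestE a t₁ (t₂ - t₁) X`. -/
def nestE (P : Measure Ω) (S : ℕ → ((s : ℕ) → A s) → Ω → 𝒮)
    (Aobs : (t : ℕ) → Ω → A t) (a : (s : ℕ) → A s) (t1 : ℕ) :
    ℕ → (Ω → ℝ) → Ω → ℝ
  | 0 => fun X => condE P S Aobs t1 a X
  | (k + 1) => fun X => nestE P S Aobs a t1 k (condE P S Aobs (t1 + k + 1) a X)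

/-- `E[X ∣ H_t, A_t = b]`, the conditional expectation given the observed history and the
event `A_t = b`. -/
def condEobs (P : Measure Ω) (S : ℕ → ((s : ℕ) → A s) → Ω → 𝒮)
    (Aobs : (t : ℕ) → Ω → A t) (t : ℕ) (b : A t) (X : Ω → ℝ) : Ω → ℝ :=
  fun ω =>
    (P[fun ω' => X ω' * (if Aobs t ω' = b then (1 : ℝ) else 0) | hist S Aobs t]) ω /
      piObs P S Aobs t b ω

/-- The weighted squared loss `ℓ_Γ(z) = ½ (Γ (z)₋² + (z)₊²)`. -/
def lossG (Γ : ℝ) (z : ℝ) : ℝ := (Γ * (max (-z) 0) ^ 2 + (max z 0) ^ 2) / 2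


set_option linter.unusedSectionVars false

/-! ### Auxiliary lemmas for the proof -/

lemma integrable_of_bdd' {Ω' : Type} [MeasurableSpace Ω'] {P : Measure Ω'} [IsFiniteMeasure P]
    {f : Ω' → ℝ} {C : ℝ} (hmeas : AEStronglyMeasurable f P) (hbd : ∀ ω, |f ω| ≤ C) :
    Integrable f P :=
  Integrable.mono' (integrable_const C) hmeas
    (Filter.Eventually.of_forall (by simpa [Real.norm_eq_abs] using hbd))

/-- Doob–Dynkin factorization for `[0,1]`-valued functions. -/
lemma doob_dynkin {Ω' : Type*} {β : Type*} [MeasurableSpace β] (G : Ω' → β) {f : Ω' → ℝ}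
    (hf : Measurable[MeasurableSpace.comap G inferInstance] f)
    (h0 : ∀ ω, 0 ≤ f ω) (h1 : ∀ ω, f ω ≤ 1) :
    ∃ h : β → ℝ, Measurable h ∧ (∀ y, 0 ≤ h y) ∧ (∀ y, h y ≤ 1) ∧ ∀ ω, f ω = h (G ω) := by
  letI mΩ : MeasurableSpace Ω' := MeasurableSpace.comap G inferInstance
  have hFmeas : Measurable fun ω => ENNReal.ofReal (f ω) := ENNReal.measurable_ofReal.comp hf
  set F : Ω' → ℝ≥0∞ := fun ω => ENNReal.ofReal (f ω) with hFdef
  have hsel : ∀ (n : ℕ) (c : ℝ≥0∞), ∃ B : Set β, MeasurableSet B ∧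
      G ⁻¹' B = (SimpleFunc.eapprox F n) ⁻¹' {c} := fun n c =>
    MeasurableSpace.measurableSet_comap.mp (SimpleFunc.measurableSet_fiber _ _)
  choose B hBmeas hBeq using hsel
  set hn : ℕ → β → ℝ≥0∞ := fun n y =>
    ∑ c ∈ (SimpleFunc.eapprox F n).range, c * (B n c).indicator 1 y with hhn
  have hnmeas : ∀ n, Measurable (hn n) := by
    intro n
    refine Finset.measurable_sum _ fun c _ => ?_
    exact ((measurable_const.indicator (hBmeas n c)).const_mul c)
  have hnkey : ∀ n ω, hn n (G ω) = SimpleFunc.eapprox F n ω := by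
    intro n ω
    show (∑ c ∈ (SimpleFunc.eapprox F n).range, c * (B n c).indicator 1 (G ω))
        = SimpleFunc.eapprox F n ω
    rw [Finset.sum_eq_single (SimpleFunc.eapprox F n ω)]
    · have hmem : G ω ∈ B n (SimpleFunc.eapprox F n ω) := by
        have : ω ∈ G ⁻¹' B n (SimpleFunc.eapprox F n ω) := by
          rw [hBeq]; exact Set.mem_singleton _
        exact this
      simp [Set.indicator_of_mem hmem]
    · intro c _ hne
      have hnmem : G ω ∉ B n c := by
        intro hmem
        have h2 : ω ∈ (SimpleFunc.eapprox F n) ⁻¹' {c} := by rw [← hBeq]; exact hmem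
        have h3 : SimpleFunc.eapprox F n ω = c := h2
        exact hne h3.symm
      simp [Set.indicator_of_notMem hnmem]
    · intro hnot
      exact absurd (SimpleFunc.mem_range_self _ ω) hnot
  refine ⟨fun y => min (⨆ n, hn n y).toReal 1, ?_, ?_, ?_, ?_⟩
  · exact ((Measurable.iSup hnmeas).ennreal_toReal).min measurable_const
  · intro y; exact le_min ENNReal.toReal_nonneg zero_le_one
  · intro y; exact min_le_right _ _
  · intro ω
    show f ω = min (⨆ n, hn n (G ω)).toReal 1
    have hsup : (⨆ n, hn n (G ω)) = F ω := by
      simp_rw [hnkey]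
      exact SimpleFunc.iSup_eapprox_apply hFmeas ω
    rw [hsup, hFdef]
    simp only [ENNReal.toReal_ofReal (h0 ω)]
    exact (min_eq_left (h1 ω)).symm

/-- Collapse a coordinate in a sum over finite dependent products. -/
lemma collapse_sum {T : ℕ} {B : Fin T → Type*} [∀ t, Fintype (B t)] [∀ t, Nonempty (B t)]
    (i : Fin T) (h φ ψ : ((t : Fin T) → B t) → ℝ)
    (hh : ∀ aF b, h (Function.update aF i b) = h aF)
    (hsum : ∀ aF, (∑ b, φ (Function.update aF i b)) = ∑ b, ψ (Function.update aF i b)) :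
    ∑ aF, h aF * φ aF = ∑ aF, h aF * ψ aF := by
  classical
  set e := Equiv.piSplitAt i B with he
  have upd : ∀ (x : B i) (r : (j : {j // j ≠ i}) → B j) (b : B i),
      Function.update (e.symm (x, r)) i b = e.symm (b, r) := by
    intro x r b
    funext j
    rcases eq_or_ne j i with hj | hj
    · subst hj
      simp [he, Equiv.piSplitAt_symm_apply]
    · simp [he, Function.update_of_ne hj, Equiv.piSplitAt_symm_apply, hj]
  have x₀ : B i := Classical.arbitrary _
  have reduce : ∀ χ : ((t : Fin T) → B t) → ℝ,
      ∑ aF, h aF * χ aF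
        = ∑ r, h (e.symm (x₀, r)) * ∑ b, χ (Function.update (e.symm (x₀, r)) i b) := by
    intro χ
    rw [← Equiv.sum_comp e.symm (fun aF => h aF * χ aF), Fintype.sum_prod_type, Finset.sum_comm]
    refine Finset.sum_congr rfl fun r _ => ?_
    rw [Finset.mul_sum]
    refine Finset.sum_congr rfl fun x _ => ?_
    rw [← upd x₀ r x, hh]
  rw [reduce φ, reduce ψ]
  refine Finset.sum_congr rfl fun r _ => ?_
  rw [hsum]

section Helpers

variable [∀ t, MeasurableSingletonClass (A t)]
variable {P : Measure Ω} {S : ℕ → ((s : ℕ) → A s) → Ω → 𝒮} {R : ℕ → ((s : ℕ) → A s) → Ω → ℝ}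
  {Abar : (t : ℕ) → Ω → A t} {T : ℕ}

lemma histC_le_m (hS : ∀ t a, Measurable (S t a)) (t : ℕ) (a : (s : ℕ) → A s) :
    histC S t a ≤ m := by
  refine iSup_le fun r => iSup_le fun _ => ?_
  exact measurable_iff_comap_le.mp (hS r a)

lemma histC_le_comap (t : ℕ) (a : (s : ℕ) → A s) :
    histC S t a ≤ MeasurableSpace.comap (fun ω (r : Fin (t + 1)) => S r.1 a ω) inferInstance := by
  refine iSup_le fun r => iSup_le fun hr => ?_
  have hr' : r < t + 1 := Finset.mem_range.mp hr
  calc MeasurableSpace.comap (S r a) inferInstance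
      = MeasurableSpace.comap ((fun v : Fin (t + 1) → 𝒮 => v ⟨r, hr'⟩)
          ∘ (fun ω (r' : Fin (t + 1)) => S r'.1 a ω)) inferInstance := rfl
    _ = (MeasurableSpace.comap (fun v : Fin (t + 1) → 𝒮 => v ⟨r, hr'⟩)
          inferInstance).comap (fun ω (r' : Fin (t + 1)) => S r'.1 a ω) :=
        (MeasurableSpace.comap_comp).symm
    _ ≤ MeasurableSpace.comap (fun ω (r' : Fin (t + 1)) => S r'.1 a ω) inferInstance :=
        MeasurableSpace.comap_mono (measurable_iff_comap_le.mp (measurable_pi_apply _))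

lemma measurable_S_seq (hS : ∀ t a, Measurable (S t a))
    (hSpre : ∀ t (a a' : (s : ℕ) → A s), (∀ s, s < t → a s = a' s) → S t a = S t a')
    (hA : ∀ t, Measurable (Abar t)) (r : ℕ) :
    Measurable fun ω => S r (seqOf Abar ω) ω := by
  have key : (fun ω => S r (seqOf Abar ω) ω)
      = fun ω => (fun (p : Ω × ((s : Fin r) → A s.1)) => S r (extAct r p.2) p.1)
          (ω, fun s : Fin r => Abar s.1 ω) := by
    funext ω
    have h := hSpre r (seqOf Abar ω) (extAct r fun s : Fin r => Abar s.1 ω) ?_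
    · exact congrFun h ω
    · intro s hs
      simp [seqOf, extAct, hs]
  rw [key]
  have h1 : Measurable fun (p : Ω × ((s : Fin r) → A s.1)) => S r (extAct r p.2) p.1 :=
    measurable_from_prod_countable_left fun p => hS r (extAct r p)
  exact h1.comp (measurable_id.prodMk (measurable_pi_lambda _ fun s => hA s.1))

lemma hist_le_m (hS : ∀ t a, Measurable (S t a))
    (hSpre : ∀ t (a a' : (s : ℕ) → A s), (∀ s, s < t → a s = a' s) → S t a = S t a')
    (hA : ∀ t, Measurable (Abar t)) (j : ℕ) : hist S Abar j ≤ m := by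
  refine sup_le ?_ ?_
  · exact iSup_le fun r => iSup_le fun _ =>
      measurable_iff_comap_le.mp (measurable_S_seq hS hSpre hA r)
  · exact iSup_le fun t => iSup_le fun _ => measurable_iff_comap_le.mp (hA t)

lemma comap_S_seq_le_hist {r j : ℕ} (hrj : r ≤ j) :
    MeasurableSpace.comap (fun ω => S r (seqOf Abar ω) ω) inferInstance ≤ hist S Abar j :=
  le_trans (le_iSup₂ (f := fun s (_ : s ∈ Finset.range (j + 1)) =>
      MeasurableSpace.comap (fun ω => S s (seqOf Abar ω) ω) inferInstance) r
      (Finset.mem_range.mpr (Nat.lt_succ_of_le hrj))) le_sup_left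

lemma comap_Abar_le_hist {t j : ℕ} (htj : t < j) :
    MeasurableSpace.comap (Abar t) inferInstance ≤ hist (𝒮 := 𝒮) S Abar j :=
  le_trans (le_iSup₂ (f := fun s (_ : s ∈ Finset.range j) =>
      MeasurableSpace.comap (Abar s) inferInstance) t (Finset.mem_range.mpr htj)) le_sup_right

lemma measurable_ind_comap {t : ℕ} (b : A t) :
    Measurable[MeasurableSpace.comap (Abar t) inferInstance]
      fun ω => if Abar t ω = b then (1 : ℝ) else 0 := by
  have hset : MeasurableSet[MeasurableSpace.comap (Abar t) inferInstance]
      {ω | Abar t ω = b} := by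
    refine ⟨{b}, measurableSet_singleton b, ?_⟩
    ext ω; simp
  exact Measurable.ite hset measurable_const measurable_const

lemma measurable_Wfut (hS : ∀ t a, Measurable (S t a)) (hR : ∀ t a, Measurable (R t a))
    (T t : ℕ) : Measurable (Wfut S R T t) := by
  refine Measurable.prodMk ?_ ?_
  · exact measurable_pi_lambda _ fun a => measurable_pi_lambda _ fun s => hR s.1 a
  · exact measurable_pi_lambda _ fun a => measurable_pi_lambda _ fun s => hS s.1 a

end Helpers

section CIStep

variable [∀ t, MeasurableSingletonClass (A t)]
variable {P : Measure Ω} [IsProbabilityMeasure P]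
variable {S : ℕ → ((s : ℕ) → A s) → Ω → 𝒮} {R : ℕ → ((s : ℕ) → A s) → Ω → ℝ}
variable {Abar : (t : ℕ) → Ω → A t} {πbar : (t : ℕ) → A t → ((s : ℕ) → A s) → Ω → ℝ}
variable {T : ℕ}

lemma integral_congr_fun' {f g : Ω → ℝ} (h : ∀ ω, f ω = g ω) :
    ∫ ω, f ω ∂P = ∫ ω, g ω ∂P := by
  congr 1
  exact funext h

lemma ci_step
    (hSmeas : ∀ t a, Measurable (S t a)) (hRmeas : ∀ t a, Measurable (R t a))
    (hSpre : ∀ t (a a' : (s : ℕ) → A s), (∀ s, s < t → a s = a' s) → S t a = S t a')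
    (hRint : ∀ t a, Integrable (R t a) P)
    (hπbarPre : ∀ t (b : A t) (a a' : (s : ℕ) → A s),
      (∀ s, s < t → a s = a' s) → πbar t b a = πbar t b a')
    (hπbarMeas : ∀ t (b : A t) (a : (s : ℕ) → A s), Measurable[histC S t a] (πbar t b a))
    (hπbarNonneg : ∀ t (b : A t) (a : (s : ℕ) → A s) (ω : Ω), 0 ≤ πbar t b a ω)
    (hπbarSum : ∀ t (a : (s : ℕ) → A s) (ω : Ω), (∑ b : A t, πbar t b a ω) = 1)
    (hAbar : ∀ t, Measurable (Abar t))
    (hGen : GeneratedBy P S T Abar πbar)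
    (hIg : ∀ t < T, SeqIgnorableAt P S R T Abar t)
    {j s : ℕ} (hjs : j ≤ s) (hsT : s < T) (a : (s : ℕ) → A s) :
    ∫ ω, (∏ t ∈ Finset.range j, if Abar t ω = a t then (1:ℝ) else 0)
        * ((if Abar j ω = a j then (1:ℝ) else 0)
          * ((∏ t ∈ Finset.Ico (j + 1) (s + 1), πbar t (a t) a ω) * R s a ω)) ∂P
      = ∫ ω, (∏ t ∈ Finset.range j, if Abar t ω = a t then (1:ℝ) else 0)
        * (πbar j (a j) a ω
          * ((∏ t ∈ Finset.Ico (j + 1) (s + 1), πbar t (a t) a ω) * R s a ω)) ∂P := by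
  classical
  have hjT : j < T := lt_of_le_of_lt hjs hsT
  have hπle1 : ∀ t (b : A t) (a' : (s : ℕ) → A s) ω, πbar t b a' ω ≤ 1 := by
    intro t b a' ω
    calc πbar t b a' ω ≤ ∑ b', πbar t b' a' ω :=
          Finset.single_le_sum (fun b' _ => hπbarNonneg t b' a' ω) (Finset.mem_univ b)
      _ = 1 := hπbarSum t a' ω
  have hfac : ∀ t : ℕ, ∃ h : (Fin (t + 1) → 𝒮) → ℝ, Measurable h ∧ (∀ y, 0 ≤ h y)
      ∧ (∀ y, h y ≤ 1) ∧ ∀ ω, πbar t (a t) a ω = h (fun r : Fin (t + 1) => S r.1 a ω) :=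
    fun t => doob_dynkin _ ((hπbarMeas t (a t) a).mono (histC_le_comap t a) le_rfl)
      (fun ω => hπbarNonneg _ _ _ ω) (fun ω => hπle1 _ _ _ ω)
  choose g gMeas g0 g1 gEq using hfac
  set W := Wfut S R T j with hWdef
  have hmH_le : (hist S Abar j) ≤ m := hist_le_m hSmeas hSpre hAbar j
  have hWmeas : Measurable W := measurable_Wfut hSmeas hRmeas T j
  have hcomapW_le : MeasurableSpace.comap W inferInstance ≤ m :=
    measurable_iff_comap_le.mp hWmeas
  have hmG_le : (hist S Abar j ⊔ MeasurableSpace.comap W inferInstance) ≤ m := sup_le hmH_le hcomapW_le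
  have hmH_leG : (hist S Abar j) ≤ (hist S Abar j ⊔ MeasurableSpace.comap W inferInstance) := le_sup_left
  set V : (t : ℕ) → Ω → (Fin (t + 1) → 𝒮) :=
    fun t ω r => if r.1 ≤ j then S r.1 (seqOf Abar ω) ω else S r.1 a ω with hV
  set E : Ω → ℝ := fun ω => ∏ t ∈ Finset.range j, if Abar t ω = a t then (1:ℝ) else 0 with hE
  set I : Ω → ℝ := fun ω => if Abar j ω = a j then (1:ℝ) else 0 with hIdef
  set X : Ω → ℝ := fun ω =>
    (∏ t ∈ Finset.Ico (j + 1) (s + 1), πbar t (a t) a ω) * R s a ω with hX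
  set X' : Ω → ℝ := fun ω =>
    (∏ t ∈ Finset.Ico (j + 1) (s + 1), g t (V t ω)) * R s a ω with hX'
  set Z : Ω → ℝ := fun ω => E ω * X' ω with hZ
  have hEmatch : ∀ ω, E ω ≠ 0 → ∀ t, t < j → Abar t ω = a t := by
    intro ω h t ht
    by_contra hne
    exact h (Finset.prod_eq_zero (Finset.mem_range.mpr ht) (by simp [hne]))
  have hEX : ∀ ω, E ω * X ω = E ω * X' ω := by
    intro ω
    rcases eq_or_ne (E ω) 0 with h0 | h0
    · rw [h0, zero_mul, zero_mul]
    · have hmatch := hEmatch ω h0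
      congr 1
      rw [hX, hX']
      dsimp only
      congr 1
      refine Finset.prod_congr rfl fun t _ => ?_
      rw [gEq t ω]
      congr 1
      funext r
      rw [hV]
      dsimp only
      by_cases hr : r.1 ≤ j
      · simp only [hr, if_true]
        have hss : S r.1 a = S r.1 (seqOf Abar ω) :=
          hSpre r.1 _ _ fun s' hs' => (hmatch s' (lt_of_lt_of_le hs' hr)).symm
        exact congrFun hss ω
      · simp only [hr, if_false]
  have hImeas : Measurable I :=
    (measurable_ind_comap (Abar := Abar) (a j)).mono
      (measurable_iff_comap_le.mp (hAbar j)) le_rfl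
  have hIbd : ∀ ω, |I ω| ≤ 1 := by
    intro ω; rw [hIdef]; dsimp only; split <;> norm_num
  have hIint : Integrable I P := integrable_of_bdd' hImeas.aestronglyMeasurable hIbd
  have hEmeas_mH : Measurable[(hist S Abar j)] E := by
    rw [hE]
    refine Finset.measurable_prod _ fun t ht => ?_
    exact (measurable_ind_comap (a t)).mono
      (comap_Abar_le_hist (Finset.mem_range.mp ht)) le_rfl
  have hVmeas : ∀ t, t ≤ s → Measurable[(hist S Abar j ⊔ MeasurableSpace.comap W inferInstance)] (V t) := by
    intro t hts
    letI : MeasurableSpace Ω := hist S Abar j ⊔ MeasurableSpace.comap W inferInstance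
    refine measurable_pi_lambda _ fun r => ?_
    rcases le_or_gt r.1 j with hr | hr
    · have h1 : Measurable[(hist S Abar j)] fun ω => S r.1 (seqOf Abar ω) ω :=
        (comap_measurable _).mono (comap_S_seq_le_hist hr) le_rfl
      have h2 : (fun ω => V t ω r) = fun ω => S r.1 (seqOf Abar ω) ω := by
        funext ω; rw [hV]; simp [hr]
      rw [h2]
      exact h1.mono hmH_leG le_rfl
    · have hrT : r.1 < T := lt_of_le_of_lt (le_trans (Nat.lt_succ_iff.mp r.2) hts) hsT
      have h1 : (fun ω => V t ω r) = (fun y : (((s' : ℕ) → A s') → {s' : ℕ // j ≤ s' ∧ s' < T} → ℝ)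
                × (((s' : ℕ) → A s') → {s' : ℕ // j < s' ∧ s' < T} → 𝒮) =>
                  y.2 a ⟨r.1, ⟨hr, hrT⟩⟩) ∘ W := by
        funext ω; rw [hV]; simp [not_le.mpr hr]; rfl
      rw [h1]
      exact ((measurable_pi_apply _).comp
        ((measurable_pi_apply a).comp measurable_snd)).comp
        ((comap_measurable W).mono le_sup_right le_rfl)
  have hRmeas_mG : Measurable[(hist S Abar j ⊔ MeasurableSpace.comap W inferInstance)] (R s a) := by
    have h2 : R s a = (fun y : (((s' : ℕ) → A s') → {s' : ℕ // j ≤ s' ∧ s' < T} → ℝ)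
        × (((s' : ℕ) → A s') → {s' : ℕ // j < s' ∧ s' < T} → 𝒮) =>
          y.1 a ⟨s, ⟨hjs, hsT⟩⟩) ∘ W := rfl
    letI : MeasurableSpace Ω := hist S Abar j ⊔ MeasurableSpace.comap W inferInstance
    rw [h2]
    exact ((measurable_pi_apply _).comp
      ((measurable_pi_apply a).comp measurable_fst)).comp
      ((comap_measurable W).mono le_sup_right le_rfl)
  have hX'meas : Measurable[(hist S Abar j ⊔ MeasurableSpace.comap W inferInstance)] X' := by
    letI : MeasurableSpace Ω := hist S Abar j ⊔ MeasurableSpace.comap W inferInstance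
    rw [hX']
    refine Measurable.mul ?_ hRmeas_mG
    refine Finset.measurable_prod _ fun t ht => ?_
    exact (gMeas t).comp (hVmeas t (by have := (Finset.mem_Ico.mp ht).2; omega))
  have hZmeas : Measurable[(hist S Abar j ⊔ MeasurableSpace.comap W inferInstance)] Z := by
    letI : MeasurableSpace Ω := hist S Abar j ⊔ MeasurableSpace.comap W inferInstance
    rw [hZ]; exact (hEmeas_mH.mono hmH_leG le_rfl).mul hX'meas
  have hZsm : StronglyMeasurable[(hist S Abar j ⊔ MeasurableSpace.comap W inferInstance)] Z := hZmeas.stronglyMeasurable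
  have hEbd : ∀ ω, 0 ≤ E ω ∧ E ω ≤ 1 := by
    intro ω
    rw [hE]; dsimp only
    constructor
    · exact Finset.prod_nonneg fun t _ => by split <;> norm_num
    · exact Finset.prod_le_one (fun t _ => by split <;> norm_num)
        (fun t _ => by split <;> norm_num)
  have hX'bd : ∀ ω, |X' ω| ≤ |R s a ω| := by
    intro ω
    rw [hX']; dsimp only
    rw [abs_mul]
    have h1 : |∏ t ∈ Finset.Ico (j + 1) (s + 1), g t (V t ω)| ≤ 1 := by
      rw [abs_of_nonneg (Finset.prod_nonneg fun t _ => g0 t _)]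
      exact Finset.prod_le_one (fun t _ => g0 t _) (fun t _ => g1 t _)
    nlinarith [abs_nonneg (R s a ω), abs_nonneg (∏ t ∈ Finset.Ico (j + 1) (s + 1), g t (V t ω))]
  have hZbd : ∀ ω, |Z ω| ≤ |R s a ω| := by
    intro ω
    rw [hZ]; dsimp only
    rw [abs_mul]
    have h1 := hEbd ω
    have h2 := hX'bd ω
    have h3 : |E ω| ≤ 1 := by rw [abs_of_nonneg h1.1]; exact h1.2
    nlinarith [abs_nonneg (X' ω), abs_nonneg (E ω)]
  have hZint : Integrable Z P :=
    Integrable.mono' (hRint s a).abs ((hZmeas.mono hmG_le le_rfl).aestronglyMeasurable)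
      (Filter.Eventually.of_forall fun ω => by rw [Real.norm_eq_abs]; exact hZbd ω)
  set D : Ω → ℝ := P[I|hist S Abar j] with hD
  have hDint : Integrable D P := integrable_condExp
  have hDsm : StronglyMeasurable[(hist S Abar j)] D := by rw [hD]; exact stronglyMeasurable_condExp
  have hDbdd : ∀ᵐ ω ∂P, |D ω| ≤ ((1 : NNReal) : ℝ) := by
    rw [hD]
    exact ae_bdd_condExp_of_ae_bdd (R := 1)
      (Filter.Eventually.of_forall fun ω => by simpa using hIbd ω)
  set C : Set (Set Ω) :=
    {M | ∃ H v, MeasurableSet[(hist S Abar j)] H ∧ MeasurableSet v ∧ M = H ∩ W ⁻¹' v} with hC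
  have hgenC : (hist S Abar j ⊔ MeasurableSpace.comap W inferInstance) = MeasurableSpace.generateFrom C := by
    refine le_antisymm ?_ (MeasurableSpace.generateFrom_le ?_)
    · refine sup_le ?_ ?_
      · intro s' hs'
        exact MeasurableSpace.measurableSet_generateFrom
          ⟨s', Set.univ, hs', MeasurableSet.univ, by simp⟩
      · intro s' hs'
        obtain ⟨v, hv, rfl⟩ := hs'
        exact MeasurableSpace.measurableSet_generateFrom
          ⟨Set.univ, v, MeasurableSet.univ, hv, by simp⟩
    · rintro M ⟨H, v, hH, hv, rfl⟩
      exact MeasurableSet.inter (hmH_leG H hH)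
        ((le_sup_right : MeasurableSpace.comap W inferInstance ≤ (hist S Abar j ⊔ MeasurableSpace.comap W inferInstance)) _ ⟨v, hv, rfl⟩)
  have hpiC : IsPiSystem C := by
    rintro M1 ⟨H1, v1, hH1, hv1, rfl⟩ M2 ⟨H2, v2, hH2, hv2, rfl⟩ _
    refine ⟨H1 ∩ H2, v1 ∩ v2, hH1.inter hH2, hv1.inter hv2, ?_⟩
    rw [Set.preimage_inter]
    ext ω
    simp only [Set.mem_inter_iff]
    tauto
  have hID : ∫ ω, I ω ∂P = ∫ ω, D ω ∂P := (integral_condExp hmH_le).symm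
  have hsets : ∀ M, MeasurableSet[(hist S Abar j ⊔ MeasurableSpace.comap W inferInstance)] M → ∫ ω in M, I ω ∂P = ∫ ω in M, D ω ∂P := by
    intro M hM
    refine MeasurableSpace.induction_on_inter (m := hist S Abar j ⊔ MeasurableSpace.comap W inferInstance)
      (C := fun M _ => ∫ ω in M, I ω ∂P = ∫ ω in M, D ω ∂P) (s := C) hgenC hpiC ?_ ?_ ?_ ?_ M hM
    · simp
    · rintro M' ⟨H, v, hH, hv, rfl⟩
      have hHm : MeasurableSet H := hmH_le H hH
      have hvW : MeasurableSet (W ⁻¹' v) := hWmeas hv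
      set Iv : Ω → ℝ := fun ω => Set.indicator v (fun _ => (1:ℝ)) (W ω) with hIv
      have hIvmeas : Measurable Iv := (measurable_const.indicator hv).comp hWmeas
      have hIvbd : ∀ ω, |Iv ω| ≤ 1 := by
        intro ω; rw [hIv]; dsimp only; rw [Set.indicator_apply]; split <;> norm_num
      have hIvint : Integrable Iv P := integrable_of_bdd' hIvmeas.aestronglyMeasurable hIvbd
      have hIIvint : Integrable (fun ω => I ω * Iv ω) P :=
        integrable_of_bdd' ((hImeas.mul hIvmeas).aestronglyMeasurable) (C := 1)
          (fun ω => by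
            rw [abs_mul]
            nlinarith [hIbd ω, hIvbd ω, abs_nonneg (I ω), abs_nonneg (Iv ω)])
      have hindI : ∀ (f : Ω → ℝ) ω, (W ⁻¹' v).indicator f ω = f ω * Iv ω := by
        intro f ω
        rw [hIv]
        dsimp only
        rw [Set.indicator_apply, Set.indicator_apply]
        by_cases hω : W ω ∈ v
        · simp [hω]
        · simp [hω]
      have hCI := hIg j hjT {a j} v (measurableSet_singleton _) hv
      rw [← hWdef] at hCI
      have hprod_eq : (fun ω => ({a j} : Set (A j)).indicator (fun _ => (1:ℝ)) (Abar j ω)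
          * v.indicator (fun _ => (1:ℝ)) (W ω)) = fun ω => I ω * Iv ω := by
        funext ω
        have hu : ({a j} : Set (A j)).indicator (fun _ => (1:ℝ)) (Abar j ω) = I ω := by
          rw [hIdef, Set.indicator_apply]
          simp
        rw [hu]
      have hu_eq : (fun ω => ({a j} : Set (A j)).indicator (fun _ => (1:ℝ)) (Abar j ω)) = I := by
        funext ω
        rw [hIdef, Set.indicator_apply]
        simp
      have hv_eq : (fun ω => v.indicator (fun _ => (1:ℝ)) (W ω)) = Iv := rfl
      rw [hprod_eq, hu_eq, hv_eq, ← hD] at hCI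
      have hDIvint : Integrable (D * Iv) P := by
        have h := hIvint.bdd_mul ((hDsm.mono hmH_le).aestronglyMeasurable)
          (hDbdd.mono fun ω hω => by rw [Real.norm_eq_abs]; simpa using hω)
        exact h
      calc ∫ ω in H ∩ W ⁻¹' v, I ω ∂P
          = ∫ ω in H, (W ⁻¹' v).indicator I ω ∂P := (setIntegral_indicator hvW).symm
        _ = ∫ ω in H, I ω * Iv ω ∂P := setIntegral_congr_fun hHm fun ω _ => hindI I ω
        _ = ∫ ω in H, (P[fun ω' => I ω' * Iv ω'|hist S Abar j]) ω ∂P :=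
            (setIntegral_condExp hmH_le hIIvint hH).symm
        _ = ∫ ω in H, D ω * (P[Iv|hist S Abar j]) ω ∂P :=
            setIntegral_congr_ae hHm (hCI.mono fun ω hω _ => hω)
        _ = ∫ ω in H, (P[D * Iv|hist S Abar j]) ω ∂P := by
            refine setIntegral_congr_ae hHm ?_
            have hmul := condExp_mul_of_stronglyMeasurable_left (μ := P) hDsm hDIvint hIvint
            exact hmul.mono fun ω hω _ => hω.symm
        _ = ∫ ω in H, (D * Iv) ω ∂P := setIntegral_condExp hmH_le hDIvint hH
        _ = ∫ ω in H, (W ⁻¹' v).indicator D ω ∂P :=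
            setIntegral_congr_fun hHm fun ω _ => (hindI D ω).symm
        _ = ∫ ω in H ∩ W ⁻¹' v, D ω ∂P := setIntegral_indicator hvW
    · intro M' hM' hQ
      have h1 := integral_add_compl (hmG_le M' hM') hIint
      have h2 := integral_add_compl (hmG_le M' hM') hDint
      linarith
    · intro f hdisj hmeas hQ
      have h1 : ∫ ω in ⋃ n, f n, I ω ∂P = ∑' n, ∫ ω in f n, I ω ∂P :=
        integral_iUnion (fun n => hmG_le _ (hmeas n)) hdisj hIint.integrableOn
      have h2 : ∫ ω in ⋃ n, f n, D ω ∂P = ∑' n, ∫ ω in f n, D ω ∂P :=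
        integral_iUnion (fun n => hmG_le _ (hmeas n)) hdisj hDint.integrableOn
      rw [h1, h2]
      exact tsum_congr hQ
  have hDG : D =ᵐ[P] P[I|hist S Abar j ⊔ MeasurableSpace.comap W inferInstance] :=
    ae_eq_condExp_of_forall_setIntegral_eq hmG_le hIint
      (fun s' _ _ => hDint.integrableOn)
      (fun s' hs' _ => (hsets s' hs').symm)
      ((hDsm.mono hmH_leG).aestronglyMeasurable)
  have hZIint : Integrable (Z * I) P := by
    have h := hZint.bdd_mul hImeas.aestronglyMeasurable
      (Filter.Eventually.of_forall fun ω => by rw [Real.norm_eq_abs]; exact hIbd ω)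
    exact h.congr (Filter.Eventually.of_forall fun ω => mul_comm (I ω) (Z ω))
  have hcondmul : P[Z * I|hist S Abar j ⊔ MeasurableSpace.comap W inferInstance] =ᵐ[P] Z * P[I|hist S Abar j ⊔ MeasurableSpace.comap W inferInstance] :=
    condExp_mul_of_stronglyMeasurable_left hZsm hZIint hIint
  have hgen' : D =ᵐ[P] fun ω => πbar j (a j) (seqOf Abar ω) ω := by
    have h := hGen j hjT (a j)
    rw [hD]
    exact h
  have hfinal1 : ∀ ω, (∏ t ∈ Finset.range j, if Abar t ω = a t then (1:ℝ) else 0)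
      * ((if Abar j ω = a j then (1:ℝ) else 0)
        * ((∏ t ∈ Finset.Ico (j + 1) (s + 1), πbar t (a t) a ω) * R s a ω))
      = (Z * I) ω := by
    intro ω
    show E ω * (I ω * X ω) = Z ω * I ω
    have h1 := hEX ω
    rw [hZ]
    dsimp only
    calc E ω * (I ω * X ω) = (E ω * X ω) * I ω := by ring
      _ = (E ω * X' ω) * I ω := by rw [h1]
  have hfinal2 : ∀ ω, (∏ t ∈ Finset.range j, if Abar t ω = a t then (1:ℝ) else 0)
      * (πbar j (a j) a ω * ((∏ t ∈ Finset.Ico (j + 1) (s + 1), πbar t (a t) a ω) * R s a ω))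
      = Z ω * πbar j (a j) a ω := by
    intro ω
    show E ω * (πbar j (a j) a ω * X ω) = Z ω * πbar j (a j) a ω
    have h1 := hEX ω
    rw [hZ]
    dsimp only
    calc E ω * (πbar j (a j) a ω * X ω) = (E ω * X ω) * πbar j (a j) a ω := by ring
      _ = (E ω * X' ω) * πbar j (a j) a ω := by rw [h1]
  calc ∫ ω, (∏ t ∈ Finset.range j, if Abar t ω = a t then (1:ℝ) else 0)
        * ((if Abar j ω = a j then (1:ℝ) else 0)
          * ((∏ t ∈ Finset.Ico (j + 1) (s + 1), πbar t (a t) a ω) * R s a ω)) ∂P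
      = ∫ ω, (Z * I) ω ∂P := integral_congr_fun' hfinal1
    _ = ∫ ω, (P[Z * I|hist S Abar j ⊔ MeasurableSpace.comap W inferInstance]) ω ∂P := (integral_condExp hmG_le).symm
    _ = ∫ ω, Z ω * πbar j (a j) a ω ∂P := by
        refine integral_congr_ae ?_
        filter_upwards [hcondmul, hDG, hgen'] with ω h1 h2 h3
        rw [h1]
        show Z ω * (P[I|hist S Abar j ⊔ MeasurableSpace.comap W inferInstance]) ω = Z ω * πbar j (a j) a ω
        rw [← h2, h3]
        rcases eq_or_ne (Z ω) 0 with hz | hz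
        · rw [hz, zero_mul, zero_mul]
        · have hEne : E ω ≠ 0 := left_ne_zero_of_mul (show E ω * X' ω ≠ 0 from hz)
          have hmatch := hEmatch ω hEne
          have hfun : πbar j (a j) (seqOf Abar ω) = πbar j (a j) a :=
            hπbarPre j (a j) _ _ fun s' hs' => hmatch s' hs'
          rw [hfun]
    _ = ∫ ω, (∏ t ∈ Finset.range j, if Abar t ω = a t then (1:ℝ) else 0)
        * (πbar j (a j) a ω
          * ((∏ t ∈ Finset.Ico (j + 1) (s + 1), πbar t (a t) a ω) * R s a ω)) ∂P :=
        (integral_congr_fun' hfinal2).symm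

end CIStep

section Core

variable [∀ t, MeasurableSingletonClass (A t)]
variable {P : Measure Ω} [IsProbabilityMeasure P]
variable {S : ℕ → ((s : ℕ) → A s) → Ω → 𝒮} {R : ℕ → ((s : ℕ) → A s) → Ω → ℝ}
variable {Abar : (t : ℕ) → Ω → A t} {πbar : (t : ℕ) → A t → ((s : ℕ) → A s) → Ω → ℝ}
variable {T : ℕ}

lemma core
    (hSmeas : ∀ t a, Measurable (S t a)) (hRmeas : ∀ t a, Measurable (R t a))
    (hSpre : ∀ t (a a' : (s : ℕ) → A s), (∀ s, s < t → a s = a' s) → S t a = S t a')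
    (hRint : ∀ t a, Integrable (R t a) P)
    (hπbarPre : ∀ t (b : A t) (a a' : (s : ℕ) → A s),
      (∀ s, s < t → a s = a' s) → πbar t b a = πbar t b a')
    (hπbarMeas : ∀ t (b : A t) (a : (s : ℕ) → A s), Measurable[histC S t a] (πbar t b a))
    (hπbarNonneg : ∀ t (b : A t) (a : (s : ℕ) → A s) (ω : Ω), 0 ≤ πbar t b a ω)
    (hπbarSum : ∀ t (a : (s : ℕ) → A s) (ω : Ω), (∑ b : A t, πbar t b a ω) = 1)
    (hAbar : ∀ t, Measurable (Abar t))
    (hGen : GeneratedBy P S T Abar πbar)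
    (hIg : ∀ t < T, SeqIgnorableAt P S R T Abar t)
    {s : ℕ} (hsT : s < T) (a : (s' : ℕ) → A s') :
    ∫ ω, (∏ t ∈ Finset.range (s + 1), if Abar t ω = a t then (1:ℝ) else 0) * R s a ω ∂P
      = ∫ ω, (∏ t ∈ Finset.range (s + 1), πbar t (a t) a ω) * R s a ω ∂P := by
  have claim : ∀ j, j ≤ s + 1 →
      ∫ ω, (∏ t ∈ Finset.range j, if Abar t ω = a t then (1:ℝ) else 0)
          * ((∏ t ∈ Finset.Ico j (s + 1), πbar t (a t) a ω) * R s a ω) ∂P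
        = ∫ ω, (∏ t ∈ Finset.range (s + 1), πbar t (a t) a ω) * R s a ω ∂P := by
    intro j
    induction j with
    | zero =>
      intro _
      refine integral_congr_fun' fun ω => ?_
      rw [Finset.range_zero, Finset.prod_empty, one_mul, Finset.range_eq_Ico]
    | succ j ih =>
      intro hj
      have hjs : j ≤ s := by omega
      have step := ci_step hSmeas hRmeas hSpre hRint hπbarPre hπbarMeas hπbarNonneg
        hπbarSum hAbar hGen hIg hjs hsT a
      calc ∫ ω, (∏ t ∈ Finset.range (j + 1), if Abar t ω = a t then (1:ℝ) else 0)
              * ((∏ t ∈ Finset.Ico (j + 1) (s + 1), πbar t (a t) a ω) * R s a ω) ∂P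
          = ∫ ω, (∏ t ∈ Finset.range j, if Abar t ω = a t then (1:ℝ) else 0)
              * ((if Abar j ω = a j then (1:ℝ) else 0)
                * ((∏ t ∈ Finset.Ico (j + 1) (s + 1), πbar t (a t) a ω) * R s a ω)) ∂P := by
            refine integral_congr_fun' fun ω => ?_
            rw [Finset.prod_range_succ]
            ring
        _ = ∫ ω, (∏ t ∈ Finset.range j, if Abar t ω = a t then (1:ℝ) else 0)
              * (πbar j (a j) a ω
                * ((∏ t ∈ Finset.Ico (j + 1) (s + 1), πbar t (a t) a ω) * R s a ω)) ∂P := step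
        _ = ∫ ω, (∏ t ∈ Finset.range j, if Abar t ω = a t then (1:ℝ) else 0)
              * ((∏ t ∈ Finset.Ico j (s + 1), πbar t (a t) a ω) * R s a ω) ∂P := by
            refine integral_congr_fun' fun ω => ?_
            rw [Finset.prod_eq_prod_Ico_succ_bot (Nat.lt_succ_of_le hjs)
              (fun t => πbar t (a t) a ω)]
            ring
        _ = ∫ ω, (∏ t ∈ Finset.range (s + 1), πbar t (a t) a ω) * R s a ω ∂P := ih (by omega)
  have h := claim (s + 1) le_rfl
  calc ∫ ω, (∏ t ∈ Finset.range (s + 1), if Abar t ω = a t then (1:ℝ) else 0) * R s a ω ∂P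
      = ∫ ω, (∏ t ∈ Finset.range (s + 1), if Abar t ω = a t then (1:ℝ) else 0)
          * ((∏ t ∈ Finset.Ico (s + 1) (s + 1), πbar t (a t) a ω) * R s a ω) ∂P := by
        refine integral_congr_fun' fun ω => ?_
        rw [Finset.Ico_self, Finset.prod_empty, one_mul]
    _ = _ := h

end Core

section Collapse

variable [∀ t, MeasurableSingletonClass (A t)]
variable {P : Measure Ω} [IsProbabilityMeasure P]
variable {S : ℕ → ((s : ℕ) → A s) → Ω → 𝒮} {R : ℕ → ((s : ℕ) → A s) → Ω → ℝ}
variable {Abar : (t : ℕ) → Ω → A t} {πbar : (t : ℕ) → A t → ((s : ℕ) → A s) → Ω → ℝ}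
variable {T : ℕ}

/-- A default action at every time. -/
def defAct (t : ℕ) : A t := Classical.arbitrary _

lemma extAct_update_same {T : ℕ} (aF : (t : Fin T) → A t.1) (i : Fin T) (b : A i.1) :
    extAct T (Function.update aF i b) i.1 = b := by
  have hi : i.1 < T := i.isLt
  simp only [extAct, dif_pos hi]
  exact Function.update_self i b aF

lemma extAct_update_ne {T : ℕ} (aF : (t : Fin T) → A t.1) (i : Fin T) (b : A i.1)
    {t : ℕ} (ht : t ≠ i.1) : extAct T (Function.update aF i b) t = extAct T aF t := by
  simp only [extAct]
  split
  · next h =>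
    rw [Function.update_of_ne (fun hEq => ht (congrArg Fin.val hEq))]
  · rfl

lemma integrable_mul_R (hRint : ∀ t a, Integrable (R t a) P)
    {s : ℕ} (a : (s' : ℕ) → A s') {c : Ω → ℝ}
    (hc : Measurable c) (hbd : ∀ ω, |c ω| ≤ 1) :
    Integrable (fun ω => c ω * R s a ω) P :=
  (hRint s a).bdd_mul hc.aestronglyMeasurable
    (Filter.Eventually.of_forall fun ω => by rw [Real.norm_eq_abs]; exact hbd ω)

lemma abs_indprod_le_one {aF : (t : Fin T) → A t.1} {ω : Ω} {n : ℕ} :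
    |∏ t ∈ Finset.range n, if Abar t ω = extAct T aF t then (1:ℝ) else 0| ≤ 1 := by
  rw [abs_of_nonneg (Finset.prod_nonneg fun t _ => by split <;> norm_num)]
  exact Finset.prod_le_one (fun t _ => by split <;> norm_num)
    (fun t _ => by split <;> norm_num)

lemma abs_chiprod_le_one {aF : (t : Fin T) → A t.1} {n : ℕ} :
    |∏ t ∈ Finset.Ico n T, if extAct T aF t = defAct (A := A) t then (1:ℝ) else 0| ≤ 1 := by
  rw [abs_of_nonneg (Finset.prod_nonneg fun t _ => by split <;> norm_num)]
  exact Finset.prod_le_one (fun t _ => by split <;> norm_num)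
    (fun t _ => by split <;> norm_num)

lemma measurable_indprod (hAbar : ∀ t, Measurable (Abar t)) (aF : (t : Fin T) → A t.1) (n : ℕ) :
    Measurable fun ω => ∏ t ∈ Finset.range n, if Abar t ω = extAct T aF t then (1:ℝ) else 0 := by
  refine Finset.measurable_prod _ fun t _ => ?_
  exact (measurable_ind_comap (extAct T aF t)).mono
    (measurable_iff_comap_le.mp (hAbar t)) le_rfl

lemma step_I
    (hRpre : ∀ t (a a' : (s : ℕ) → A s), (∀ s, s ≤ t → a s = a' s) → R t a = R t a')
    (hRint : ∀ t a, Integrable (R t a) P)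
    (hAbar : ∀ t, Measurable (Abar t))
    {s m : ℕ} (hsm : s < m) (hmT : m < T) :
    ∑ aF : (t : Fin T) → A t.1, ∫ ω,
        ((∏ t ∈ Finset.range (m + 1), if Abar t ω = extAct T aF t then (1:ℝ) else 0)
          * ∏ t ∈ Finset.Ico (m + 1) T, if extAct T aF t = defAct (A := A) t then (1:ℝ) else 0)
          * R s (extAct T aF) ω ∂P
      = ∑ aF : (t : Fin T) → A t.1, ∫ ω,
        ((∏ t ∈ Finset.range m, if Abar t ω = extAct T aF t then (1:ℝ) else 0)
          * ∏ t ∈ Finset.Ico m T, if extAct T aF t = defAct (A := A) t then (1:ℝ) else 0)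
          * R s (extAct T aF) ω ∂P := by
  classical
  set i : Fin T := ⟨m, hmT⟩ with hi
  have hintf : ∀ (aF : (t : Fin T) → A t.1) (n k : ℕ), Integrable (fun ω =>
      ((∏ t ∈ Finset.range n, if Abar t ω = extAct T aF t then (1:ℝ) else 0)
        * ∏ t ∈ Finset.Ico k T, if extAct T aF t = defAct (A := A) t then (1:ℝ) else 0)
        * R s (extAct T aF) ω) P := by
    intro aF n k
    refine integrable_mul_R hRint _ ((measurable_indprod hAbar aF n).mul measurable_const) ?_
    intro ω
    rw [abs_mul]
    have h1 := abs_indprod_le_one (Abar := Abar) (aF := aF) (ω := ω) (n := n)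
    have h2 := abs_chiprod_le_one (A := A) (T := T) (aF := aF) (n := k)
    nlinarith [abs_nonneg (∏ t ∈ Finset.range n, if Abar t ω = extAct T aF t then (1:ℝ) else 0),
      abs_nonneg (∏ t ∈ Finset.Ico k T, if extAct T aF t = defAct (A := A) t then (1:ℝ) else 0)]
  calc ∑ aF : (t : Fin T) → A t.1, ∫ ω,
        ((∏ t ∈ Finset.range (m + 1), if Abar t ω = extAct T aF t then (1:ℝ) else 0)
          * ∏ t ∈ Finset.Ico (m + 1) T, if extAct T aF t = defAct (A := A) t then (1:ℝ) else 0)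
          * R s (extAct T aF) ω ∂P
      = ∫ ω, ∑ aF : (t : Fin T) → A t.1,
        ((∏ t ∈ Finset.range (m + 1), if Abar t ω = extAct T aF t then (1:ℝ) else 0)
          * ∏ t ∈ Finset.Ico (m + 1) T, if extAct T aF t = defAct (A := A) t then (1:ℝ) else 0)
          * R s (extAct T aF) ω ∂P :=
        (integral_finset_sum _ fun aF _ => hintf aF (m + 1) (m + 1)).symm
    _ = ∫ ω, ∑ aF : (t : Fin T) → A t.1,
        ((∏ t ∈ Finset.range m, if Abar t ω = extAct T aF t then (1:ℝ) else 0)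
          * ∏ t ∈ Finset.Ico m T, if extAct T aF t = defAct (A := A) t then (1:ℝ) else 0)
          * R s (extAct T aF) ω ∂P := by
        refine integral_congr_fun' fun ω => ?_
        have hne : ∀ (aF : (t : Fin T) → A t.1) (b : A i.1) (t : ℕ), t ≠ m →
            extAct T (Function.update aF i b) t = extAct T aF t := fun aF b t ht =>
          extAct_update_ne aF i b ht
        have hRupd : ∀ (aF : (t : Fin T) → A t.1) (b : A i.1),
            R s (extAct T (Function.update aF i b)) = R s (extAct T aF) := fun aF b =>
          hRpre s _ _ fun s' hs' => hne aF b s' (by omega)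
        calc ∑ aF : (t : Fin T) → A t.1,
              ((∏ t ∈ Finset.range (m + 1), if Abar t ω = extAct T aF t then (1:ℝ) else 0)
                * ∏ t ∈ Finset.Ico (m + 1) T, if extAct T aF t = defAct (A := A) t then (1:ℝ) else 0)
                * R s (extAct T aF) ω
            = ∑ aF : (t : Fin T) → A t.1,
              (((∏ t ∈ Finset.range m, if Abar t ω = extAct T aF t then (1:ℝ) else 0)
                * ∏ t ∈ Finset.Ico (m + 1) T, if extAct T aF t = defAct (A := A) t then (1:ℝ) else 0)
                * R s (extAct T aF) ω)
                * (if Abar m ω = extAct T aF m then (1:ℝ) else 0) := by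
              refine Finset.sum_congr rfl fun aF _ => ?_
              rw [Finset.prod_range_succ]
              ring
          _ = ∑ aF : (t : Fin T) → A t.1,
              (((∏ t ∈ Finset.range m, if Abar t ω = extAct T aF t then (1:ℝ) else 0)
                * ∏ t ∈ Finset.Ico (m + 1) T, if extAct T aF t = defAct (A := A) t then (1:ℝ) else 0)
                * R s (extAct T aF) ω)
                * (if extAct T aF m = defAct (A := A) m then (1:ℝ) else 0) := by
              refine collapse_sum i _ _ _ ?_ ?_
              · intro aF b
                have e1 : (∏ t ∈ Finset.range m,
                      if Abar t ω = extAct T (Function.update aF i b) t then (1:ℝ) else 0)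
                    = ∏ t ∈ Finset.range m, if Abar t ω = extAct T aF t then (1:ℝ) else 0 :=
                  Finset.prod_congr rfl fun t ht => by
                    rw [hne aF b t (by have := Finset.mem_range.mp ht; omega)]
                have e2 : (∏ t ∈ Finset.Ico (m + 1) T,
                      if extAct T (Function.update aF i b) t = defAct (A := A) t then (1:ℝ) else 0)
                    = ∏ t ∈ Finset.Ico (m + 1) T,
                      if extAct T aF t = defAct (A := A) t then (1:ℝ) else 0 :=
                  Finset.prod_congr rfl fun t ht => by
                    rw [hne aF b t (by have := (Finset.mem_Ico.mp ht).1; omega)]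
                rw [hRupd aF b, e1, e2]
              · intro aF
                have h1 : ∀ b : A i.1, extAct T (Function.update aF i b) m = b := fun b =>
                  extAct_update_same aF i b
                calc ∑ b : A i.1, (if Abar m ω = extAct T (Function.update aF i b) m
                        then (1:ℝ) else 0)
                    = ∑ b : A i.1, (if Abar m ω = b then (1:ℝ) else 0) := by
                      refine Finset.sum_congr rfl fun b _ => ?_
                      rw [h1 b]
                  _ = 1 := by rw [Finset.sum_ite_eq]; simp
                  _ = ∑ b : A i.1, (if b = defAct (A := A) m then (1:ℝ) else 0) := by
                      rw [Finset.sum_ite_eq']; simp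
                  _ = ∑ b : A i.1, (if extAct T (Function.update aF i b) m = defAct (A := A) m
                        then (1:ℝ) else 0) := by
                      refine Finset.sum_congr rfl fun b _ => ?_
                      rw [h1 b]
          _ = ∑ aF : (t : Fin T) → A t.1,
              ((∏ t ∈ Finset.range m, if Abar t ω = extAct T aF t then (1:ℝ) else 0)
                * ∏ t ∈ Finset.Ico m T, if extAct T aF t = defAct (A := A) t then (1:ℝ) else 0)
                * R s (extAct T aF) ω := by
              refine Finset.sum_congr rfl fun aF _ => ?_
              rw [Finset.prod_eq_prod_Ico_succ_bot hmT
                (fun t => if extAct T aF t = defAct (A := A) t then (1:ℝ) else 0)]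
              ring
    _ = ∑ aF : (t : Fin T) → A t.1, ∫ ω,
        ((∏ t ∈ Finset.range m, if Abar t ω = extAct T aF t then (1:ℝ) else 0)
          * ∏ t ∈ Finset.Ico m T, if extAct T aF t = defAct (A := A) t then (1:ℝ) else 0)
          * R s (extAct T aF) ω ∂P :=
        integral_finset_sum _ fun aF _ => hintf aF m m

end Collapse

section Collapse2

variable [∀ t, MeasurableSingletonClass (A t)]
variable {P : Measure Ω} [IsProbabilityMeasure P]
variable {S : ℕ → ((s : ℕ) → A s) → Ω → 𝒮} {R : ℕ → ((s : ℕ) → A s) → Ω → ℝ}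
variable {Abar : (t : ℕ) → Ω → A t} {πbar : (t : ℕ) → A t → ((s : ℕ) → A s) → Ω → ℝ}
variable {T : ℕ}

lemma measurable_piprod (hSmeas : ∀ t a, Measurable (S t a))
    (hπbarMeas : ∀ t (b : A t) (a : (s : ℕ) → A s), Measurable[histC S t a] (πbar t b a))
    (aF : (t : Fin T) → A t.1) (n : ℕ) :
    Measurable fun ω => ∏ t ∈ Finset.range n, πbar t (extAct T aF t) (extAct T aF) ω := by
  refine Finset.measurable_prod _ fun t _ => ?_
  exact (hπbarMeas t (extAct T aF t) (extAct T aF)).mono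
    (histC_le_m hSmeas t (extAct T aF)) le_rfl

lemma abs_piprod_le_one
    (hπbarNonneg : ∀ t (b : A t) (a : (s : ℕ) → A s) (ω : Ω), 0 ≤ πbar t b a ω)
    (hπbarSum : ∀ t (a : (s : ℕ) → A s) (ω : Ω), (∑ b : A t, πbar t b a ω) = 1)
    {a : (s' : ℕ) → A s'} {ω : Ω} {n : ℕ} :
    |∏ t ∈ Finset.range n, πbar t (a t) a ω| ≤ 1 := by
  have hle : ∀ t (b : A t), πbar t b a ω ≤ 1 := by
    intro t b
    calc πbar t b a ω ≤ ∑ b', πbar t b' a ω :=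
          Finset.single_le_sum (fun b' _ => hπbarNonneg t b' a ω) (Finset.mem_univ b)
      _ = 1 := hπbarSum t a ω
  rw [abs_of_nonneg (Finset.prod_nonneg fun t _ => hπbarNonneg t _ a ω)]
  exact Finset.prod_le_one (fun t _ => hπbarNonneg t _ a ω) (fun t _ => hle t _)

lemma step_pi
    (hSmeas : ∀ t a, Measurable (S t a))
    (hRpre : ∀ t (a a' : (s : ℕ) → A s), (∀ s, s ≤ t → a s = a' s) → R t a = R t a')
    (hRint : ∀ t a, Integrable (R t a) P)
    (hπbarPre : ∀ t (b : A t) (a a' : (s : ℕ) → A s),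
      (∀ s, s < t → a s = a' s) → πbar t b a = πbar t b a')
    (hπbarMeas : ∀ t (b : A t) (a : (s : ℕ) → A s), Measurable[histC S t a] (πbar t b a))
    (hπbarNonneg : ∀ t (b : A t) (a : (s : ℕ) → A s) (ω : Ω), 0 ≤ πbar t b a ω)
    (hπbarSum : ∀ t (a : (s : ℕ) → A s) (ω : Ω), (∑ b : A t, πbar t b a ω) = 1)
    {s m : ℕ} (hsm : s < m) (hmT : m < T) :
    ∑ aF : (t : Fin T) → A t.1, ∫ ω,
        ((∏ t ∈ Finset.range (m + 1), πbar t (extAct T aF t) (extAct T aF) ω)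
          * ∏ t ∈ Finset.Ico (m + 1) T, if extAct T aF t = defAct (A := A) t then (1:ℝ) else 0)
          * R s (extAct T aF) ω ∂P
      = ∑ aF : (t : Fin T) → A t.1, ∫ ω,
        ((∏ t ∈ Finset.range m, πbar t (extAct T aF t) (extAct T aF) ω)
          * ∏ t ∈ Finset.Ico m T, if extAct T aF t = defAct (A := A) t then (1:ℝ) else 0)
          * R s (extAct T aF) ω ∂P := by
  classical
  set i : Fin T := ⟨m, hmT⟩ with hi
  have hintf : ∀ (aF : (t : Fin T) → A t.1) (n k : ℕ), Integrable (fun ω =>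
      ((∏ t ∈ Finset.range n, πbar t (extAct T aF t) (extAct T aF) ω)
        * ∏ t ∈ Finset.Ico k T, if extAct T aF t = defAct (A := A) t then (1:ℝ) else 0)
        * R s (extAct T aF) ω) P := by
    intro aF n k
    refine integrable_mul_R hRint _
      ((measurable_piprod hSmeas hπbarMeas aF n).mul measurable_const) ?_
    intro ω
    rw [abs_mul]
    have h1 := abs_piprod_le_one (πbar := πbar) hπbarNonneg hπbarSum
      (a := extAct T aF) (ω := ω) (n := n)
    have h2 := abs_chiprod_le_one (A := A) (T := T) (aF := aF) (n := k)
    nlinarith [abs_nonneg (∏ t ∈ Finset.range n, πbar t (extAct T aF t) (extAct T aF) ω),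
      abs_nonneg (∏ t ∈ Finset.Ico k T, if extAct T aF t = defAct (A := A) t then (1:ℝ) else 0)]
  calc ∑ aF : (t : Fin T) → A t.1, ∫ ω,
        ((∏ t ∈ Finset.range (m + 1), πbar t (extAct T aF t) (extAct T aF) ω)
          * ∏ t ∈ Finset.Ico (m + 1) T, if extAct T aF t = defAct (A := A) t then (1:ℝ) else 0)
          * R s (extAct T aF) ω ∂P
      = ∫ ω, ∑ aF : (t : Fin T) → A t.1,
        ((∏ t ∈ Finset.range (m + 1), πbar t (extAct T aF t) (extAct T aF) ω)
          * ∏ t ∈ Finset.Ico (m + 1) T, if extAct T aF t = defAct (A := A) t then (1:ℝ) else 0)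
          * R s (extAct T aF) ω ∂P :=
        (integral_finset_sum _ fun aF _ => hintf aF (m + 1) (m + 1)).symm
    _ = ∫ ω, ∑ aF : (t : Fin T) → A t.1,
        ((∏ t ∈ Finset.range m, πbar t (extAct T aF t) (extAct T aF) ω)
          * ∏ t ∈ Finset.Ico m T, if extAct T aF t = defAct (A := A) t then (1:ℝ) else 0)
          * R s (extAct T aF) ω ∂P := by
        refine integral_congr_fun' fun ω => ?_
        have hne : ∀ (aF : (t : Fin T) → A t.1) (b : A i.1) (t : ℕ), t ≠ m →
            extAct T (Function.update aF i b) t = extAct T aF t := fun aF b t ht =>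
          extAct_update_ne aF i b ht
        have hRupd : ∀ (aF : (t : Fin T) → A t.1) (b : A i.1),
            R s (extAct T (Function.update aF i b)) = R s (extAct T aF) := fun aF b =>
          hRpre s _ _ fun s' hs' => hne aF b s' (by omega)
        calc ∑ aF : (t : Fin T) → A t.1,
              ((∏ t ∈ Finset.range (m + 1), πbar t (extAct T aF t) (extAct T aF) ω)
                * ∏ t ∈ Finset.Ico (m + 1) T, if extAct T aF t = defAct (A := A) t then (1:ℝ) else 0)
                * R s (extAct T aF) ω
            = ∑ aF : (t : Fin T) → A t.1,
              (((∏ t ∈ Finset.range m, πbar t (extAct T aF t) (extAct T aF) ω)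
                * ∏ t ∈ Finset.Ico (m + 1) T, if extAct T aF t = defAct (A := A) t then (1:ℝ) else 0)
                * R s (extAct T aF) ω)
                * πbar m (extAct T aF m) (extAct T aF) ω := by
              refine Finset.sum_congr rfl fun aF _ => ?_
              rw [Finset.prod_range_succ]
              ring
          _ = ∑ aF : (t : Fin T) → A t.1,
              (((∏ t ∈ Finset.range m, πbar t (extAct T aF t) (extAct T aF) ω)
                * ∏ t ∈ Finset.Ico (m + 1) T, if extAct T aF t = defAct (A := A) t then (1:ℝ) else 0)
                * R s (extAct T aF) ω)
                * (if extAct T aF m = defAct (A := A) m then (1:ℝ) else 0) := by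
              refine collapse_sum i _ _ _ ?_ ?_
              · intro aF b
                have e1 : (∏ t ∈ Finset.range m,
                      πbar t (extAct T (Function.update aF i b) t)
                        (extAct T (Function.update aF i b)) ω)
                    = ∏ t ∈ Finset.range m, πbar t (extAct T aF t) (extAct T aF) ω := by
                  refine Finset.prod_congr rfl fun t ht => ?_
                  have htm : t ≠ m := by have := Finset.mem_range.mp ht; omega
                  rw [hne aF b t htm]
                  have hfun : πbar t (extAct T aF t) (extAct T (Function.update aF i b))
                      = πbar t (extAct T aF t) (extAct T aF) :=
                    hπbarPre t _ _ _ fun s' hs' => hne aF b s'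
                      (by have := Finset.mem_range.mp ht; omega)
                  rw [hfun]
                have e2 : (∏ t ∈ Finset.Ico (m + 1) T,
                      if extAct T (Function.update aF i b) t = defAct (A := A) t then (1:ℝ) else 0)
                    = ∏ t ∈ Finset.Ico (m + 1) T,
                      if extAct T aF t = defAct (A := A) t then (1:ℝ) else 0 :=
                  Finset.prod_congr rfl fun t ht => by
                    rw [hne aF b t (by have := (Finset.mem_Ico.mp ht).1; omega)]
                rw [hRupd aF b, e1, e2]
              · intro aF
                have h1 : ∀ b : A i.1,
                    πbar m (extAct T (Function.update aF i b) m)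
                      (extAct T (Function.update aF i b)) ω = πbar m b (extAct T aF) ω := by
                  intro b
                  rw [extAct_update_same aF i b]
                  have hfun : πbar m b (extAct T (Function.update aF i b))
                      = πbar m b (extAct T aF) :=
                    hπbarPre m b _ _ fun s' hs' => hne aF b s' (by omega)
                  rw [hfun]
                calc ∑ b : A i.1, πbar m (extAct T (Function.update aF i b) m)
                        (extAct T (Function.update aF i b)) ω
                    = ∑ b : A i.1, πbar m b (extAct T aF) ω :=
                      Finset.sum_congr rfl fun b _ => h1 b
                  _ = 1 := hπbarSum m (extAct T aF) ω
                  _ = ∑ b : A i.1, (if b = defAct (A := A) m then (1:ℝ) else 0) := by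
                      rw [Finset.sum_ite_eq']; simp
                  _ = ∑ b : A i.1, (if extAct T (Function.update aF i b) m = defAct (A := A) m
                        then (1:ℝ) else 0) := by
                      refine Finset.sum_congr rfl fun b _ => ?_
                      rw [extAct_update_same aF i b]
          _ = ∑ aF : (t : Fin T) → A t.1,
              ((∏ t ∈ Finset.range m, πbar t (extAct T aF t) (extAct T aF) ω)
                * ∏ t ∈ Finset.Ico m T, if extAct T aF t = defAct (A := A) t then (1:ℝ) else 0)
                * R s (extAct T aF) ω := by
              refine Finset.sum_congr rfl fun aF _ => ?_
              rw [Finset.prod_eq_prod_Ico_succ_bot hmT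
                (fun t => if extAct T aF t = defAct (A := A) t then (1:ℝ) else 0)]
              ring
    _ = ∑ aF : (t : Fin T) → A t.1, ∫ ω,
        ((∏ t ∈ Finset.range m, πbar t (extAct T aF t) (extAct T aF) ω)
          * ∏ t ∈ Finset.Ico m T, if extAct T aF t = defAct (A := A) t then (1:ℝ) else 0)
          * R s (extAct T aF) ω ∂P :=
        integral_finset_sum _ fun aF _ => hintf aF m m

end Collapse2

section Expand

variable [∀ t, MeasurableSingletonClass (A t)]
variable {P : Measure Ω} [IsProbabilityMeasure P]
variable {R : ℕ → ((s : ℕ) → A s) → Ω → ℝ} {T : ℕ}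

lemma integrable_ret (hRint : ∀ t a, Integrable (R t a) P) (γ : ℝ) (a : (s' : ℕ) → A s') :
    Integrable (ret R γ T a) P := by
  have h : Integrable (fun ω => ∑ t ∈ Finset.range T, γ ^ t * R t a ω) P :=
    integrable_finset_sum _ fun t _ => (hRint t a).const_mul _
  exact h

lemma expand_c (hRint : ∀ t a, Integrable (R t a) P) {γ : ℝ} (a : (s' : ℕ) → A s')
    {c : Ω → ℝ} (hc : Measurable c) (hbd : ∀ ω, |c ω| ≤ 1) :
    ∫ ω, c ω * ret R γ T a ω ∂P = ∑ t ∈ Finset.range T, γ ^ t * ∫ ω, c ω * R t a ω ∂P := by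
  have h1 : ∀ ω, c ω * ret R γ T a ω = ∑ t ∈ Finset.range T, γ ^ t * (c ω * R t a ω) := by
    intro ω
    rw [ret, Finset.mul_sum]
    exact Finset.sum_congr rfl fun t _ => by ring
  rw [integral_congr_fun' h1,
    integral_finset_sum _ fun t _ => ((integrable_mul_R hRint a hc hbd).const_mul _)]
  exact Finset.sum_congr rfl fun t _ => integral_const_mul _ _

end Expand

section PerS

variable [∀ t, MeasurableSingletonClass (A t)]
variable {P : Measure Ω} [IsProbabilityMeasure P]
variable {S : ℕ → ((s : ℕ) → A s) → Ω → 𝒮} {R : ℕ → ((s : ℕ) → A s) → Ω → ℝ}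
variable {Abar : (t : ℕ) → Ω → A t} {πbar : (t : ℕ) → A t → ((s : ℕ) → A s) → Ω → ℝ}
variable {T : ℕ}

lemma per_s
    (hSmeas : ∀ t a, Measurable (S t a)) (hRmeas : ∀ t a, Measurable (R t a))
    (hSpre : ∀ t (a a' : (s : ℕ) → A s), (∀ s, s < t → a s = a' s) → S t a = S t a')
    (hRpre : ∀ t (a a' : (s : ℕ) → A s), (∀ s, s ≤ t → a s = a' s) → R t a = R t a')
    (hRint : ∀ t a, Integrable (R t a) P)
    (hπbarPre : ∀ t (b : A t) (a a' : (s : ℕ) → A s),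
      (∀ s, s < t → a s = a' s) → πbar t b a = πbar t b a')
    (hπbarMeas : ∀ t (b : A t) (a : (s : ℕ) → A s), Measurable[histC S t a] (πbar t b a))
    (hπbarNonneg : ∀ t (b : A t) (a : (s : ℕ) → A s) (ω : Ω), 0 ≤ πbar t b a ω)
    (hπbarSum : ∀ t (a : (s : ℕ) → A s) (ω : Ω), (∑ b : A t, πbar t b a ω) = 1)
    (hAbar : ∀ t, Measurable (Abar t))
    (hGen : GeneratedBy P S T Abar πbar)
    (hIg : ∀ t < T, SeqIgnorableAt P S R T Abar t)
    {s : ℕ} (hsT : s < T) :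
    ∑ aF : (t : Fin T) → A t.1, ∫ ω,
        (∏ t ∈ Finset.range T, if Abar t ω = extAct T aF t then (1:ℝ) else 0)
          * R s (extAct T aF) ω ∂P
      = ∑ aF : (t : Fin T) → A t.1, ∫ ω,
        (∏ t ∈ Finset.range T, πbar t (extAct T aF t) (extAct T aF) ω)
          * R s (extAct T aF) ω ∂P := by
  classical
  have chainI : ∀ m (hm : s + 1 ≤ m), m ≤ T →
      (∑ aF : (t : Fin T) → A t.1, ∫ ω,
        ((∏ t ∈ Finset.range m, if Abar t ω = extAct T aF t then (1:ℝ) else 0)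
          * ∏ t ∈ Finset.Ico m T, if extAct T aF t = defAct (A := A) t then (1:ℝ) else 0)
          * R s (extAct T aF) ω ∂P)
      = ∑ aF : (t : Fin T) → A t.1, ∫ ω,
        ((∏ t ∈ Finset.range (s + 1), if Abar t ω = extAct T aF t then (1:ℝ) else 0)
          * ∏ t ∈ Finset.Ico (s + 1) T, if extAct T aF t = defAct (A := A) t then (1:ℝ) else 0)
          * R s (extAct T aF) ω ∂P := by
    intro m hm
    induction m, hm using Nat.le_induction with
    | base => intro _; rfl
    | succ m hm ih =>
      intro hmT'
      have hmT : m < T := by omega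
      exact (step_I hRpre hRint hAbar (by omega) hmT).trans (ih (by omega))
  have chainPi : ∀ m (hm : s + 1 ≤ m), m ≤ T →
      (∑ aF : (t : Fin T) → A t.1, ∫ ω,
        ((∏ t ∈ Finset.range m, πbar t (extAct T aF t) (extAct T aF) ω)
          * ∏ t ∈ Finset.Ico m T, if extAct T aF t = defAct (A := A) t then (1:ℝ) else 0)
          * R s (extAct T aF) ω ∂P)
      = ∑ aF : (t : Fin T) → A t.1, ∫ ω,
        ((∏ t ∈ Finset.range (s + 1), πbar t (extAct T aF t) (extAct T aF) ω)
          * ∏ t ∈ Finset.Ico (s + 1) T, if extAct T aF t = defAct (A := A) t then (1:ℝ) else 0)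
          * R s (extAct T aF) ω ∂P := by
    intro m hm
    induction m, hm using Nat.le_induction with
    | base => intro _; rfl
    | succ m hm ih =>
      intro hmT'
      have hmT : m < T := by omega
      exact (step_pi hSmeas hRpre hRint hπbarPre hπbarMeas hπbarNonneg hπbarSum
        (by omega) hmT).trans (ih (by omega))
  have hmid : (∑ aF : (t : Fin T) → A t.1, ∫ ω,
        ((∏ t ∈ Finset.range (s + 1), if Abar t ω = extAct T aF t then (1:ℝ) else 0)
          * ∏ t ∈ Finset.Ico (s + 1) T, if extAct T aF t = defAct (A := A) t then (1:ℝ) else 0)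
          * R s (extAct T aF) ω ∂P)
      = ∑ aF : (t : Fin T) → A t.1, ∫ ω,
        ((∏ t ∈ Finset.range (s + 1), πbar t (extAct T aF t) (extAct T aF) ω)
          * ∏ t ∈ Finset.Ico (s + 1) T, if extAct T aF t = defAct (A := A) t then (1:ℝ) else 0)
          * R s (extAct T aF) ω ∂P := by
    refine Finset.sum_congr rfl fun aF _ => ?_
    have hcore := core hSmeas hRmeas hSpre hRint hπbarPre hπbarMeas hπbarNonneg hπbarSum
      hAbar hGen hIg hsT (extAct T aF)
    calc ∫ ω, ((∏ t ∈ Finset.range (s + 1), if Abar t ω = extAct T aF t then (1:ℝ) else 0)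
            * ∏ t ∈ Finset.Ico (s + 1) T, if extAct T aF t = defAct (A := A) t then (1:ℝ) else 0)
            * R s (extAct T aF) ω ∂P
        = ∫ ω, (∏ t ∈ Finset.Ico (s + 1) T,
              if extAct T aF t = defAct (A := A) t then (1:ℝ) else 0)
            * ((∏ t ∈ Finset.range (s + 1), if Abar t ω = extAct T aF t then (1:ℝ) else 0)
              * R s (extAct T aF) ω) ∂P := integral_congr_fun' fun ω => by ring
      _ = (∏ t ∈ Finset.Ico (s + 1) T,
              if extAct T aF t = defAct (A := A) t then (1:ℝ) else 0)
            * ∫ ω, (∏ t ∈ Finset.range (s + 1),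
              if Abar t ω = extAct T aF t then (1:ℝ) else 0) * R s (extAct T aF) ω ∂P :=
          integral_const_mul _ _
      _ = (∏ t ∈ Finset.Ico (s + 1) T,
              if extAct T aF t = defAct (A := A) t then (1:ℝ) else 0)
            * ∫ ω, (∏ t ∈ Finset.range (s + 1),
              πbar t (extAct T aF t) (extAct T aF) ω) * R s (extAct T aF) ω ∂P := by
          rw [hcore]
      _ = ∫ ω, (∏ t ∈ Finset.Ico (s + 1) T,
              if extAct T aF t = defAct (A := A) t then (1:ℝ) else 0)
            * ((∏ t ∈ Finset.range (s + 1), πbar t (extAct T aF t) (extAct T aF) ω)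
              * R s (extAct T aF) ω) ∂P := (integral_const_mul _ _).symm
      _ = ∫ ω, ((∏ t ∈ Finset.range (s + 1), πbar t (extAct T aF t) (extAct T aF) ω)
            * ∏ t ∈ Finset.Ico (s + 1) T, if extAct T aF t = defAct (A := A) t then (1:ℝ) else 0)
            * R s (extAct T aF) ω ∂P := integral_congr_fun' fun ω => by ring
  calc ∑ aF : (t : Fin T) → A t.1, ∫ ω,
        (∏ t ∈ Finset.range T, if Abar t ω = extAct T aF t then (1:ℝ) else 0)
          * R s (extAct T aF) ω ∂P
      = ∑ aF : (t : Fin T) → A t.1, ∫ ω,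
        ((∏ t ∈ Finset.range T, if Abar t ω = extAct T aF t then (1:ℝ) else 0)
          * ∏ t ∈ Finset.Ico T T, if extAct T aF t = defAct (A := A) t then (1:ℝ) else 0)
          * R s (extAct T aF) ω ∂P := by
        refine Finset.sum_congr rfl fun aF _ => integral_congr_fun' fun ω => ?_
        rw [Finset.Ico_self, Finset.prod_empty, mul_one]
    _ = _ := chainI T (by omega) le_rfl
    _ = _ := hmid
    _ = ∑ aF : (t : Fin T) → A t.1, ∫ ω,
        ((∏ t ∈ Finset.range T, πbar t (extAct T aF t) (extAct T aF) ω)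
          * ∏ t ∈ Finset.Ico T T, if extAct T aF t = defAct (A := A) t then (1:ℝ) else 0)
          * R s (extAct T aF) ω ∂P := (chainPi T (by omega) le_rfl).symm
    _ = ∑ aF : (t : Fin T) → A t.1, ∫ ω,
        (∏ t ∈ Finset.range T, πbar t (extAct T aF t) (extAct T aF) ω)
          * R s (extAct T aF) ω ∂P := by
        refine Finset.sum_congr rfl fun aF _ => integral_congr_fun' fun ω => ?_
        rw [Finset.Ico_self, Finset.prod_empty, mul_one]

end PerS
/-- **Value representation for a sequentially ignorable evaluation policy**
(Lemma `cand-identity`): `E[Y(Ā_{1:T})] = ∑_{a_{1:T}} E[Y(a_{1:T}) ∏_t π̄_t(a_t ∣ H̄_t(a_{1:t-1}))]`. -/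
theorem evaluation_policy_value_representation
    {Ω 𝒮 : Type} [m : MeasurableSpace Ω] [MeasurableSpace 𝒮]
    {A : ℕ → Type} [∀ t, Fintype (A t)] [∀ t, Nonempty (A t)]
    [∀ t, DecidableEq (A t)] [∀ t, MeasurableSpace (A t)]
    [∀ t, MeasurableSingletonClass (A t)]
    (P : Measure Ω) [IsProbabilityMeasure P]
    (T : ℕ) (hT : 0 < T) (γ : ℝ) (hγ : γ ∈ Set.Ioc (0 : ℝ) 1)
    -- potential outcomes: states and integrable rewards, depending only on past actions
    (S : ℕ → ((s : ℕ) → A s) → Ω → 𝒮) (R : ℕ → ((s : ℕ) → A s) → Ω → ℝ)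
    (hSmeas : ∀ t a, Measurable (S t a)) (hRmeas : ∀ t a, Measurable (R t a))
    (hSpre : ∀ t (a a' : (s : ℕ) → A s), (∀ s, s < t → a s = a' s) → S t a = S t a')
    (hRpre : ∀ t (a a' : (s : ℕ) → A s), (∀ s, s ≤ t → a s = a' s) → R t a = R t a')
    (hRint : ∀ t a, Integrable (R t a) P)
    -- observed actions generated by the (unknown) behavior policy
    (Aobs : (t : ℕ) → Ω → A t) (hAobs : ∀ t, Measurable (Aobs t))
    -- the evaluation policy π̄ and the actions Ā it generates
    (πbar : (t : ℕ) → A t → ((s : ℕ) → A s) → Ω → ℝ)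
    (hπbarPre : ∀ t (b : A t) (a a' : (s : ℕ) → A s),
      (∀ s, s < t → a s = a' s) → πbar t b a = πbar t b a')
    (hπbarMeas : ∀ t (b : A t) (a : (s : ℕ) → A s), Measurable[histC S t a] (πbar t b a))
    (hπbarNonneg : ∀ t (b : A t) (a : (s : ℕ) → A s) (ω : Ω), 0 ≤ πbar t b a ω)
    (hπbarSum : ∀ t (a : (s : ℕ) → A s) (ω : Ω), (∑ b : A t, πbar t b a ω) = 1)
    (Abar : (t : ℕ) → Ω → A t) (hAbar : ∀ t, Measurable (Abar t))
    (hGen : GeneratedBy P S T Abar πbar)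
    -- sequential ignorability of the evaluation policy
    (hIgEval : ∀ t < T, SeqIgnorableAt P S R T Abar t)
 :
    ∫ ω, ret R γ T (seqOf Abar ω) ω ∂P
      = ∑ aF : (s : Fin T) → A s.1,
          ∫ ω, ret R γ T (extAct T aF) ω *
              ∏ t ∈ Finset.range T, πbar t (extAct T aF t) (extAct T aF) ω ∂P := by
  classical
  have hπle1 : ∀ t (b : A t) (a' : (s' : ℕ) → A s') (ω : Ω), |πbar t b a' ω| ≤ 1 := by
    intro t b a' ω
    rw [abs_of_nonneg (hπbarNonneg t b a' ω)]
    calc πbar t b a' ω ≤ ∑ b', πbar t b' a' ω :=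
          Finset.single_le_sum (fun b' _ => hπbarNonneg t b' a' ω) (Finset.mem_univ b)
      _ = 1 := hπbarSum t a' ω
  -- pointwise decomposition of the return along the realized action sequence
  have hpoint : ∀ ω, ret R γ T (seqOf Abar ω) ω
      = ∑ aF : (t : Fin T) → A t.1,
          (∏ t ∈ Finset.range T, if Abar t ω = extAct T aF t then (1:ℝ) else 0)
            * ret R γ T (extAct T aF) ω := by
    intro ω
    have hprod : ∀ aF : (t : Fin T) → A t.1,
        (∏ t ∈ Finset.range T, if Abar t ω = extAct T aF t then (1:ℝ) else 0)
          = if aF = (fun t : Fin T => Abar t.1 ω) then (1:ℝ) else 0 := by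
      intro aF
      rw [Finset.prod_boole]
      by_cases h : aF = fun t : Fin T => Abar t.1 ω
      · rw [if_pos h, if_pos]
        intro t ht
        have htT : t < T := Finset.mem_range.mp ht
        rw [h]
        simp [extAct, htT]
      · rw [if_neg h, if_neg]
        intro hall
        apply h
        funext t
        have h1 := hall t.1 (Finset.mem_range.mpr t.isLt)
        have h2 : extAct T aF t.1 = aF t := by simp [extAct, t.isLt]
        rw [h2] at h1
        exact h1.symm
    calc ret R γ T (seqOf Abar ω) ω
        = ret R γ T (extAct T (fun t : Fin T => Abar t.1 ω)) ω := by
          rw [ret, ret]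
          refine Finset.sum_congr rfl fun t ht => ?_
          have htT : t < T := Finset.mem_range.mp ht
          have hfun : R t (seqOf Abar ω) = R t (extAct T (fun t' : Fin T => Abar t'.1 ω)) :=
            hRpre t _ _ fun s' hs' => by
              simp [seqOf, extAct, lt_of_le_of_lt hs' htT]
          rw [hfun]
      _ = ∑ aF : (t : Fin T) → A t.1,
          (if aF = (fun t : Fin T => Abar t.1 ω) then (1:ℝ) else 0)
            * ret R γ T (extAct T aF) ω := by
          symm
          simp only [ite_mul, one_mul, zero_mul]
          rw [Finset.sum_ite_eq' Finset.univ (fun t : Fin T => Abar t.1 ω)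
            (fun aF => ret R γ T (extAct T aF) ω)]
          simp
      _ = ∑ aF : (t : Fin T) → A t.1,
          (∏ t ∈ Finset.range T, if Abar t ω = extAct T aF t then (1:ℝ) else 0)
            * ret R γ T (extAct T aF) ω := by
          refine Finset.sum_congr rfl fun aF _ => ?_
          rw [hprod aF]
  have hindmeas : ∀ aF : (t : Fin T) → A t.1, Measurable fun ω =>
      ∏ t ∈ Finset.range T, if Abar t ω = extAct T aF t then (1:ℝ) else 0 :=
    fun aF => measurable_indprod hAbar aF T
  have hpimeas : ∀ aF : (t : Fin T) → A t.1, Measurable fun ω =>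
      ∏ t ∈ Finset.range T, πbar t (extAct T aF t) (extAct T aF) ω :=
    fun aF => measurable_piprod hSmeas hπbarMeas aF T
  have hpibd : ∀ (aF : (t : Fin T) → A t.1) ω,
      |∏ t ∈ Finset.range T, πbar t (extAct T aF t) (extAct T aF) ω| ≤ 1 := fun aF ω =>
    abs_piprod_le_one (πbar := πbar) hπbarNonneg hπbarSum
  calc ∫ ω, ret R γ T (seqOf Abar ω) ω ∂P
      = ∫ ω, ∑ aF : (t : Fin T) → A t.1,
          (∏ t ∈ Finset.range T, if Abar t ω = extAct T aF t then (1:ℝ) else 0)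
            * ret R γ T (extAct T aF) ω ∂P := integral_congr_fun' hpoint
    _ = ∑ aF : (t : Fin T) → A t.1, ∫ ω,
          (∏ t ∈ Finset.range T, if Abar t ω = extAct T aF t then (1:ℝ) else 0)
            * ret R γ T (extAct T aF) ω ∂P :=
        integral_finset_sum _ fun aF _ =>
          (integrable_ret hRint γ (extAct T aF)).bdd_mul
            (hindmeas aF).aestronglyMeasurable
            (Filter.Eventually.of_forall fun ω => by
              rw [Real.norm_eq_abs]; exact abs_indprod_le_one)
    _ = ∑ aF : (t : Fin T) → A t.1, ∑ t ∈ Finset.range T, γ ^ t * ∫ ω,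
          (∏ t' ∈ Finset.range T, if Abar t' ω = extAct T aF t' then (1:ℝ) else 0)
            * R t (extAct T aF) ω ∂P :=
        Finset.sum_congr rfl fun aF _ => expand_c hRint (extAct T aF) (hindmeas aF)
          (fun ω => abs_indprod_le_one)
    _ = ∑ t ∈ Finset.range T, ∑ aF : (t : Fin T) → A t.1, γ ^ t * ∫ ω,
          (∏ t' ∈ Finset.range T, if Abar t' ω = extAct T aF t' then (1:ℝ) else 0)
            * R t (extAct T aF) ω ∂P := Finset.sum_comm
    _ = ∑ t ∈ Finset.range T, γ ^ t * ∑ aF : (t : Fin T) → A t.1, ∫ ω,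
          (∏ t' ∈ Finset.range T, if Abar t' ω = extAct T aF t' then (1:ℝ) else 0)
            * R t (extAct T aF) ω ∂P :=
        Finset.sum_congr rfl fun t _ => (Finset.mul_sum _ _ _).symm
    _ = ∑ t ∈ Finset.range T, γ ^ t * ∑ aF : (t : Fin T) → A t.1, ∫ ω,
          (∏ t' ∈ Finset.range T, πbar t' (extAct T aF t') (extAct T aF) ω)
            * R t (extAct T aF) ω ∂P := by
        refine Finset.sum_congr rfl fun t ht => ?_
        rw [per_s hSmeas hRmeas hSpre hRpre hRint hπbarPre hπbarMeas hπbarNonneg hπbarSum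
          hAbar hGen hIgEval (Finset.mem_range.mp ht)]
    _ = ∑ aF : (t : Fin T) → A t.1, ∑ t ∈ Finset.range T, γ ^ t * ∫ ω,
          (∏ t' ∈ Finset.range T, πbar t' (extAct T aF t') (extAct T aF) ω)
            * R t (extAct T aF) ω ∂P := by
        rw [Finset.sum_comm]
        exact Finset.sum_congr rfl fun t _ => Finset.mul_sum _ _ _
    _ = ∑ aF : (t : Fin T) → A t.1, ∫ ω,
          (∏ t ∈ Finset.range T, πbar t (extAct T aF t) (extAct T aF) ω)
            * ret R γ T (extAct T aF) ω ∂P :=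
        Finset.sum_congr rfl fun aF _ =>
          (expand_c hRint (extAct T aF) (hpimeas aF) (hpibd aF)).symm
    _ = ∑ aF : (t : Fin T) → A t.1, ∫ ω, ret R γ T (extAct T aF) ω *
            ∏ t ∈ Finset.range T, πbar t (extAct T aF t) (extAct T aF) ω ∂P :=
        Finset.sum_congr rfl fun aF _ => integral_congr_fun' fun ω => mul_comm _ _

end OPE
end
end

section
/- Let (Ω,ℱ,P) be a probability space, Γ ≥ 1, and Z a real random variable with E[Z²] < ∞. Define 𝔏 := {L : Ω → [0,∞) measurable : E[L] = 1 and L(ω) ≤ Γ·L(ω') for P⊗P-almost every pair (ω,ω')}. Then inf_{L ∈ 𝔏} E[L·Z] = μ*, where μ* is the unique real number satisfying E[(Z − μ*)_+] = Γ·E[(Z − μ*)_−]; equivalently, inf_{L ∈ 𝔏} E[L·Z] = sup{ μ ∈ ℝ : E[(Z − μ)_+ − Γ(Z − μ)_−] ≥ 0 }. -/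
open MeasureTheory

namespace ConfoundingDual

lemma ptwise {Γ : ℝ} (hΓ : 1 ≤ Γ) {μ μ' : ℝ} (h : μ ≤ μ') (z : ℝ) :
    μ' - μ ≤ (max (z - μ) 0 - Γ * max (-(z - μ)) 0) -
      (max (z - μ') 0 - Γ * max (-(z - μ')) 0) := by
  have h1 := max_zero_sub_max_neg_zero_eq_self (z - μ)
  have h2 := max_zero_add_max_neg_zero_eq_abs_self (z - μ)
  have h3 := max_zero_sub_max_neg_zero_eq_self (z - μ')
  have h4 := max_zero_add_max_neg_zero_eq_abs_self (z - μ')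
  have h5 : |z - μ| - |z - μ'| ≤ μ' - μ := by
    have h6 := abs_sub_abs_le_abs_sub (z - μ) (z - μ')
    have h7 : |(z - μ) - (z - μ')| = μ' - μ := by
      rw [show (z - μ) - (z - μ') = μ' - μ by ring, abs_of_nonneg (by linarith)]
    linarith
  nlinarith [mul_nonneg (by linarith : (0:ℝ) ≤ Γ - 1)
    (by linarith : (0:ℝ) ≤ (μ' - μ) - (|z - μ| - |z - μ'|))]

lemma lb_aux {Ω : Type*} [MeasurableSpace Ω] (P : Measure Ω) [IsProbabilityMeasure P]
    (Γ : ℝ) (hΓ : 1 ≤ Γ) (Z : Ω → ℝ) (hZ : MemLp Z 2 P) (μstar : ℝ)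
    (hμstar : ∫ ω, max (Z ω - μstar) 0 ∂P = Γ * ∫ ω, max (-(Z ω - μstar)) 0 ∂P)
    (L : Ω → ℝ) (hLm : Measurable L) (hLnn : ∀ ω, 0 ≤ L ω)
    (hL1 : (∫ ω, L ω ∂P) = 1)
    (hLae : ∀ᵐ p ∂(P.prod P), L p.1 ≤ Γ * L p.2) :
    μstar ≤ ∫ ω, L ω * Z ω ∂P := by
  have hZint : Integrable Z P := hZ.integrable one_le_two
  have hpos : Integrable (fun ω => max (Z ω - μstar) 0) P :=
    (hZint.sub (integrable_const μstar)).pos_part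
  have hneg : Integrable (fun ω => max (-(Z ω - μstar)) 0) P :=
    (hZint.sub (integrable_const μstar)).neg.pos_part
  have hLint : Integrable L P := by
    by_contra h
    rw [integral_undef h] at hL1
    norm_num at hL1
  have hswap : ∀ᵐ p ∂(P.prod P), L p.2 ≤ Γ * L p.1 :=
    (Measure.measurePreserving_swap (μ := P) (ν := P)).quasiMeasurePreserving.ae hLae
  obtain ⟨x₀, hx₀⟩ : ∃ x₀, ∀ᵐ y ∂P, L y ≤ Γ * L x₀ := by
    have h2 := Measure.ae_ae_of_ae_prod hswap
    exact h2.exists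
  set C : ℝ := Γ * L x₀ with hC
  have hCnn : 0 ≤ C := mul_nonneg (by linarith) (hLnn x₀)
  have hbd : ∀ᵐ ω ∂P, L ω ≤ C := hx₀
  have key : ∀ (g : Ω → ℝ), Integrable g P → (∀ ω, 0 ≤ g ω) →
      Integrable (fun ω => L ω * g ω) P := by
    intro g hg hgnn
    refine Integrable.mono' (hg.const_mul C) (hLm.aestronglyMeasurable.mul hg.1) ?_
    filter_upwards [hbd] with ω h
    rw [Real.norm_eq_abs, abs_of_nonneg (mul_nonneg (hLnn ω) (hgnn ω))]
    exact mul_le_mul_of_nonneg_right h (hgnn ω)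
  have hLp : Integrable (fun ω => L ω * max (Z ω - μstar) 0) P :=
    key _ hpos (fun ω => le_max_right _ _)
  have hLn : Integrable (fun ω => L ω * max (-(Z ω - μstar)) 0) P :=
    key _ hneg (fun ω => le_max_right _ _)
  have hLZ : Integrable (fun ω => L ω * Z ω) P := by
    refine Integrable.mono' (hZint.abs.const_mul C) (hLm.aestronglyMeasurable.mul hZ.1) ?_
    filter_upwards [hbd] with ω h
    rw [Real.norm_eq_abs, abs_mul, abs_of_nonneg (hLnn ω)]
    exact mul_le_mul_of_nonneg_right h (abs_nonneg _)
  have hkey : (∫ ω, L ω * max (-(Z ω - μstar)) 0 ∂P) * (∫ ω, max (Z ω - μstar) 0 ∂P)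
      ≤ Γ * (∫ ω, L ω * max (Z ω - μstar) 0 ∂P) * ∫ ω, max (-(Z ω - μstar)) 0 ∂P := by
    have h1 : Integrable (fun p : Ω × Ω =>
        (Γ * (L p.1 * max (Z p.1 - μstar) 0)) * max (-(Z p.2 - μstar)) 0) (P.prod P) :=
      (hLp.const_mul Γ).mul_prod hneg
    have h2 : Integrable (fun p : Ω × Ω =>
        max (Z p.1 - μstar) 0 * (L p.2 * max (-(Z p.2 - μstar)) 0)) (P.prod P) :=
      hpos.mul_prod hLn
    have hnnI : 0 ≤ ∫ p : Ω × Ω, ((Γ * (L p.1 * max (Z p.1 - μstar) 0)) * max (-(Z p.2 - μstar)) 0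
        - max (Z p.1 - μstar) 0 * (L p.2 * max (-(Z p.2 - μstar)) 0)) ∂(P.prod P) := by
      refine integral_nonneg_of_ae ?_
      filter_upwards [hswap] with p hp
      have h3 : 0 ≤ max (Z p.1 - μstar) 0 := le_max_right _ _
      have h4 : 0 ≤ max (-(Z p.2 - μstar)) 0 := le_max_right _ _
      simp only [Pi.zero_apply]
      nlinarith [mul_nonneg (mul_nonneg h3 h4) (sub_nonneg.2 hp)]
    have e1 := integral_prod_mul (μ := P) (ν := P)
      (fun x => Γ * (L x * max (Z x - μstar) 0)) (fun y => max (-(Z y - μstar)) 0)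
    have e2 := integral_prod_mul (μ := P) (ν := P)
      (fun x => max (Z x - μstar) 0) (fun y => L y * max (-(Z y - μstar)) 0)
    rw [integral_sub h1 h2, e1, e2, integral_const_mul] at hnnI
    nlinarith [hnnI]
  have hdecomp : ∫ ω, L ω * Z ω ∂P
      = (∫ ω, L ω * max (Z ω - μstar) 0 ∂P) - (∫ ω, L ω * max (-(Z ω - μstar)) 0 ∂P)
        + μstar := by
    have : ∀ ω, L ω * Z ω = L ω * max (Z ω - μstar) 0 - L ω * max (-(Z ω - μstar)) 0
        + μstar * L ω := by
      intro ω
      have h := max_zero_sub_max_neg_zero_eq_self (Z ω - μstar)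
      linear_combination (-(L ω)) * h
    calc ∫ ω, L ω * Z ω ∂P = ∫ ω, (L ω * max (Z ω - μstar) 0 - L ω * max (-(Z ω - μstar)) 0
        + μstar * L ω) ∂P := by exact integral_congr_ae (Filter.Eventually.of_forall this)
      _ = _ := by
        have hsub : Integrable (fun ω => L ω * max (Z ω - μstar) 0
            - L ω * max (-(Z ω - μstar)) 0) P := hLp.sub hLn
        rw [integral_add hsub (hLint.const_mul μstar), integral_sub hLp hLn,
          integral_const_mul, hL1, mul_one]
  rw [hdecomp]
  have hBnn : 0 ≤ ∫ ω, max (-(Z ω - μstar)) 0 ∂P :=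
    integral_nonneg (fun ω => le_max_right _ _)
  rcases hBnn.lt_or_eq with hB | hB
  · have : (∫ ω, L ω * max (-(Z ω - μstar)) 0 ∂P) ≤ ∫ ω, L ω * max (Z ω - μstar) 0 ∂P := by
      rw [hμstar] at hkey
      have hΓpos : (0:ℝ) < Γ := by linarith
      nlinarith [mul_pos hΓpos hB]
    linarith
  · have hA : ∫ ω, max (Z ω - μstar) 0 ∂P = 0 := by rw [hμstar, ← hB]; ring
    have hpz : (fun ω => max (Z ω - μstar) 0) =ᵐ[P] 0 :=
      (integral_eq_zero_iff_of_nonneg (fun ω => le_max_right _ _) hpos).1 hA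
    have hnz : (fun ω => max (-(Z ω - μstar)) 0) =ᵐ[P] 0 :=
      (integral_eq_zero_iff_of_nonneg (fun ω => le_max_right _ _) hneg).1 hB.symm
    have h5 : ∫ ω, L ω * max (Z ω - μstar) 0 ∂P = 0 := by
      have hz : (fun ω => L ω * max (Z ω - μstar) 0) =ᵐ[P] 0 := by
        filter_upwards [hpz] with ω h
        simp only [Pi.zero_apply] at h ⊢
        rw [h, mul_zero]
      rw [integral_congr_ae hz]; simp
    have h6 : ∫ ω, L ω * max (-(Z ω - μstar)) 0 ∂P = 0 := by
      have hz : (fun ω => L ω * max (-(Z ω - μstar)) 0) =ᵐ[P] 0 := by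
        filter_upwards [hnz] with ω h
        simp only [Pi.zero_apply] at h ⊢
        rw [h, mul_zero]
      rw [integral_congr_ae hz]; simp
    rw [h5, h6]
    linarith

lemma exists_opt {Ω : Type*} [MeasurableSpace Ω] (P : Measure Ω) [IsProbabilityMeasure P]
    (Γ : ℝ) (hΓ : 1 ≤ Γ) (Z : Ω → ℝ) (hZ : MemLp Z 2 P) (μstar : ℝ)
    (hμstar : ∫ ω, max (Z ω - μstar) 0 ∂P = Γ * ∫ ω, max (-(Z ω - μstar)) 0 ∂P) :
    ∃ L : Ω → ℝ, Measurable L ∧ (∀ ω, 0 ≤ L ω) ∧ (∫ ω, L ω ∂P) = 1 ∧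
      (∀ᵐ p ∂(P.prod P), L p.1 ≤ Γ * L p.2) ∧ ∫ ω, L ω * Z ω ∂P = μstar := by
  have hZint : Integrable Z P := hZ.integrable one_le_two
  have hpos : Integrable (fun ω => max (Z ω - μstar) 0) P :=
    (hZint.sub (integrable_const μstar)).pos_part
  have hneg : Integrable (fun ω => max (-(Z ω - μstar)) 0) P :=
    (hZint.sub (integrable_const μstar)).neg.pos_part
  obtain ⟨Zm, hZmmeas, hZmae⟩ : ∃ Zm : Ω → ℝ, Measurable Zm ∧ Z =ᵐ[P] Zm := by
    have h := hZ.aestronglyMeasurable.aemeasurable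
    exact ⟨h.mk Z, h.measurable_mk, h.ae_eq_mk⟩
  set L0 : Ω → ℝ := fun ω => if Zm ω < μstar then Γ else 1 with hL0
  have hL0meas : Measurable L0 :=
    Measurable.ite (measurableSet_lt hZmmeas measurable_const) measurable_const measurable_const
  have hL0lb : ∀ ω, 1 ≤ L0 ω := by intro ω; rw [hL0]; dsimp only; split_ifs <;> linarith
  have hL0ub : ∀ ω, L0 ω ≤ Γ := by intro ω; rw [hL0]; dsimp only; split_ifs <;> linarith
  have hL0int : Integrable L0 P := by
    refine Integrable.mono' (integrable_const Γ) hL0meas.aestronglyMeasurable ?_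
    filter_upwards with ω
    rw [Real.norm_eq_abs, abs_of_nonneg (by linarith [hL0lb ω])]
    exact hL0ub ω
  set c : ℝ := ∫ ω, L0 ω ∂P with hc
  have hcge : 1 ≤ c := by
    have := integral_mono (integrable_const 1) hL0int hL0lb
    simpa using this
  have hcpos : 0 < c := by linarith
  have hpt : ∀ ω, L0 ω * (Zm ω - μstar)
      = max (Zm ω - μstar) 0 - Γ * max (-(Zm ω - μstar)) 0 := by
    intro ω
    rw [hL0]; dsimp only
    split_ifs with h
    · rw [max_eq_right (by linarith), max_eq_left (by linarith)]
      ring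
    · push_neg at h
      rw [max_eq_left (by linarith), max_eq_right (by linarith)]
      ring
  have hint1 : Integrable (fun ω => L0 ω * Z ω) P := by
    refine Integrable.mono' (hZint.abs.const_mul Γ)
      (hL0meas.aestronglyMeasurable.mul hZ.aestronglyMeasurable) ?_
    filter_upwards with ω
    rw [Real.norm_eq_abs, abs_mul, abs_of_nonneg (by linarith [hL0lb ω])]
    exact mul_le_mul_of_nonneg_right (hL0ub ω) (abs_nonneg _)
  have hval0 : ∫ ω, L0 ω * Z ω ∂P = μstar * c := by
    have e0 : ∫ ω, L0 ω * Z ω ∂P = ∫ ω, (L0 ω * (Z ω - μstar) + μstar * L0 ω) ∂P := by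
      refine integral_congr_ae (Filter.Eventually.of_forall fun ω => by ring)
    have hint2 : Integrable (fun ω => L0 ω * (Z ω - μstar)) P := by
      have : (fun ω => L0 ω * (Z ω - μstar))
          = fun ω => L0 ω * Z ω - μstar * L0 ω := by funext ω; ring
      rw [this]
      exact hint1.sub (hL0int.const_mul μstar)
    have e1 : ∫ ω, L0 ω * (Z ω - μstar) ∂P = 0 := by
      have e2 : (fun ω => L0 ω * (Z ω - μstar))
          =ᵐ[P] fun ω => max (Z ω - μstar) 0 - Γ * max (-(Z ω - μstar)) 0 := by
        filter_upwards [hZmae] with ω h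
        rw [h, hpt ω]
      rw [integral_congr_ae e2, integral_sub hpos (hneg.const_mul Γ), integral_const_mul,
        hμstar]
      ring
    rw [e0, integral_add hint2 (hL0int.const_mul μstar), e1, integral_const_mul, ← hc]
    ring
  refine ⟨fun ω => c⁻¹ * L0 ω, hL0meas.const_mul _, ?_, ?_, ?_, ?_⟩
  · intro ω
    exact mul_nonneg (by positivity) (by linarith [hL0lb ω])
  · rw [integral_const_mul, ← hc, inv_mul_cancel₀ (ne_of_gt hcpos)]
  · refine Filter.Eventually.of_forall fun p => ?_
    have h1 : L0 p.1 ≤ Γ := hL0ub p.1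
    have h2 : 1 ≤ L0 p.2 := hL0lb p.2
    have hcinv : 0 ≤ c⁻¹ := by positivity
    calc c⁻¹ * L0 p.1 ≤ c⁻¹ * Γ := by nlinarith
      _ ≤ Γ * (c⁻¹ * L0 p.2) := by
          nlinarith [mul_nonneg (mul_nonneg (by linarith : (0:ℝ) ≤ Γ) hcinv)
            (by linarith : (0:ℝ) ≤ L0 p.2 - 1)]
  · have : ∫ ω, (c⁻¹ * L0 ω) * Z ω ∂P = c⁻¹ * ∫ ω, L0 ω * Z ω ∂P := by
      rw [← integral_const_mul]
      refine integral_congr_ae (Filter.Eventually.of_forall fun ω => by ring)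
    rw [this, hval0]
    field_simp

/-- Duality for the worst case over bounded likelihood ratios: for `Γ ≥ 1` and a
square-integrable `Z`, the infimum of `E[L Z]` over all nonnegative mean-one `L` whose
values vary by at most a factor of `Γ` equals the unique `μ*` with
`E[(Z - μ*)₊] = Γ E[(Z - μ*)₋]`, which is also
`sup {μ : E[(Z - μ)₊ - Γ (Z - μ)₋] ≥ 0}`. -/
theorem inf_over_bounded_likelihood_ratios
    {Ω : Type*} [MeasurableSpace Ω] (P : Measure Ω) [IsProbabilityMeasure P]
    (Γ : ℝ) (hΓ : 1 ≤ Γ)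
    (Z : Ω → ℝ) (hZ : MemLp Z 2 P)
    (μstar : ℝ)
    (hμstar : ∫ ω, max (Z ω - μstar) 0 ∂P = Γ * ∫ ω, max (-(Z ω - μstar)) 0 ∂P) :
    (∃! μ : ℝ, ∫ ω, max (Z ω - μ) 0 ∂P = Γ * ∫ ω, max (-(Z ω - μ)) 0 ∂P) ∧
    (⨅ L : {L : Ω → ℝ // Measurable L ∧ (∀ ω, 0 ≤ L ω) ∧ (∫ ω, L ω ∂P) = 1 ∧
          ∀ᵐ p ∂(P.prod P), L p.1 ≤ Γ * L p.2},
        ∫ ω, (L : Ω → ℝ) ω * Z ω ∂P) = μstar ∧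
    μstar = sSup {μ : ℝ |
        0 ≤ ∫ ω, (max (Z ω - μ) 0 - Γ * max (-(Z ω - μ)) 0) ∂P} := by
  have hZint : Integrable Z P := hZ.integrable one_le_two
  have hpos : ∀ μ : ℝ, Integrable (fun ω => max (Z ω - μ) 0) P :=
    fun μ => (hZint.sub (integrable_const μ)).pos_part
  have hneg : ∀ μ : ℝ, Integrable (fun ω => max (-(Z ω - μ)) 0) P :=
    fun μ => (hZint.sub (integrable_const μ)).neg.pos_part
  have hGint : ∀ μ : ℝ, Integrable (fun ω => max (Z ω - μ) 0 - Γ * max (-(Z ω - μ)) 0) P :=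
    fun μ => (hpos μ).sub ((hneg μ).const_mul Γ)
  have hGeq : ∀ μ : ℝ, ∫ ω, (max (Z ω - μ) 0 - Γ * max (-(Z ω - μ)) 0) ∂P
      = (∫ ω, max (Z ω - μ) 0 ∂P) - Γ * ∫ ω, max (-(Z ω - μ)) 0 ∂P := by
    intro μ
    rw [integral_sub (hpos μ) ((hneg μ).const_mul Γ), integral_const_mul]
  set G : ℝ → ℝ := fun μ => ∫ ω, (max (Z ω - μ) 0 - Γ * max (-(Z ω - μ)) 0) ∂P with hG
  have hGstar : G μstar = 0 := by rw [hG]; simp only; rw [hGeq, hμstar]; ring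
  have hdec : ∀ μ μ' : ℝ, μ ≤ μ' → μ' - μ + G μ' ≤ G μ := by
    intro μ μ' hle
    have hmono := integral_mono (μ := P) (integrable_const (μ' - μ))
      ((hGint μ).sub (hGint μ')) (fun ω => ptwise hΓ hle (Z ω))
    simp only [Pi.sub_apply] at hmono
    rw [integral_const, integral_sub (hGint μ) (hGint μ')] at hmono
    simp only [measure_univ, probReal_univ, ENNReal.toReal_one, one_smul] at hmono
    linarith
  have hroot : ∀ μ : ℝ, (∫ ω, max (Z ω - μ) 0 ∂P = Γ * ∫ ω, max (-(Z ω - μ)) 0 ∂P) ↔ G μ = 0 := by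
    intro μ
    rw [hG]; simp only; rw [hGeq]
    constructor <;> intro h <;> linarith
  have huniq : ∃! μ : ℝ, ∫ ω, max (Z ω - μ) 0 ∂P = Γ * ∫ ω, max (-(Z ω - μ)) 0 ∂P := by
    refine ⟨μstar, (hroot μstar).2 hGstar, fun μ hμ => ?_⟩
    have hzero := (hroot μ).1 hμ
    rcases lt_trichotomy μ μstar with h | h | h
    · have := hdec μ μstar h.le; linarith
    · exact h
    · have := hdec μstar μ h.le; linarith
  have hset : {μ : ℝ | 0 ≤ ∫ ω, (max (Z ω - μ) 0 - Γ * max (-(Z ω - μ)) 0) ∂P}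
      = Set.Iic μstar := by
    ext μ
    simp only [Set.mem_setOf_eq, Set.mem_Iic]
    constructor
    · intro h
      by_contra hlt
      push_neg at hlt
      have h1 := hdec μstar μ hlt.le
      have h2 : G μ ≤ -(μ - μstar) := by linarith
      have hGμ : (0:ℝ) ≤ G μ := h
      linarith
    · intro h
      have h1 := hdec μ μstar h
      have h2 : (0:ℝ) ≤ G μ := by linarith
      exact h2
  -- the infimum part
  obtain ⟨Ls, hLsm, hLsnn, hLs1, hLsae, hLsval⟩ := exists_opt P Γ hΓ Z hZ μstar hμstar
  set T := {L : Ω → ℝ // Measurable L ∧ (∀ ω, 0 ≤ L ω) ∧ (∫ ω, L ω ∂P) = 1 ∧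
      ∀ᵐ p ∂(P.prod P), L p.1 ≤ Γ * L p.2} with hT
  have hlb : ∀ L : T, μstar ≤ ∫ ω, (L : Ω → ℝ) ω * Z ω ∂P := by
    rintro ⟨L, hLm, hLnn, hL1, hLae⟩
    exact lb_aux P Γ hΓ Z hZ μstar hμstar L hLm hLnn hL1 hLae
  haveI : Nonempty T := ⟨⟨Ls, hLsm, hLsnn, hLs1, hLsae⟩⟩
  have hbdd : BddBelow (Set.range fun L : T => ∫ ω, (L : Ω → ℝ) ω * Z ω ∂P) := by
    refine ⟨μstar, ?_⟩
    rintro _ ⟨L, rfl⟩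
    exact hlb L
  have hinf : (⨅ L : T, ∫ ω, (L : Ω → ℝ) ω * Z ω ∂P) = μstar := by
    refine le_antisymm ?_ (le_ciInf hlb)
    exact (ciInf_le hbdd ⟨Ls, hLsm, hLsnn, hLs1, hLsae⟩).trans hLsval.le
  exact ⟨huniq, hinf, by rw [hset, csSup_Iic]⟩

end ConfoundingDual
end
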